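/- arXiv:2201.08644 — 3 statements merged into one kernel-verified Lean document; each statement's English description precedes it below -/
import Mathlib

section
/- If λ ∈ Γ_k (the k-th Garding cone) and 1 ≤ i ≤ n, then σ_{k-1}(λ | i) > 0, where σ_{k-1}(λ | i) denotes the (k-1)-th elementary symmetric function of λ with the variable λ_i deleted. -/
open Finset

/-- The k-th elementary symmetric function of x = (x_1,...,x_n). -/
noncomputable def esymm (n k : ℕ) (x : Fin n → ℝ) : ℝ :=
  ∑ s ∈ (Finset.univ : Finset (Fin n)).powersetCard k, ∏ i ∈ s, x i

/-- σ_k(x | i): the k-th elementary symmetric function of x with the i-th entry deleted. -/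
noncomputable def esymmDel (n k : ℕ) (x : Fin n → ℝ) (i : Fin n) : ℝ :=
  ∑ s ∈ ((Finset.univ : Finset (Fin n)).erase i).powersetCard k, ∏ j ∈ s, x j

/-- The Garding cone Γ_k = {x : σ_j(x) > 0 for all 1 ≤ j ≤ k}. -/
def gardingCone (n k : ℕ) : Set (Fin n → ℝ) :=
  {x | ∀ j : ℕ, 1 ≤ j → j ≤ k → 0 < esymm n j x}

/-- σ_k for integer index, with the convention σ_k = 0 for k < 0. -/
noncomputable def esymmZ (n : ℕ) (k : ℤ) (x : Fin n → ℝ) : ℝ :=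
  if k < 0 then 0 else esymm n k.toNat x

/-- σ_k(x|i) for integer index, with the convention σ_k = 0 for k < 0. -/
noncomputable def esymmDelZ (n : ℕ) (k : ℤ) (x : Fin n → ℝ) (i : Fin n) : ℝ :=
  if k < 0 then 0 else esymmDel n k.toNat x i

open Polynomial in
lemma my_splits_derivative {p : ℝ[X]} (hp : p.Splits) :
    (derivative p).Splits := by
  rcases eq_or_ne (derivative p) 0 with h | h
  · rw [h]; exact Splits.zero
  have h1 : Multiset.card p.roots = p.natDegree := (splits_iff_card_roots).1 hp
  have h2 := p.card_roots_le_derivative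
  have h3 : (derivative p).natDegree ≤ p.natDegree - 1 := natDegree_derivative_le p
  have h4 : Multiset.card (derivative p).roots ≤ (derivative p).natDegree :=
    (derivative p).card_roots'
  have h5 : p.natDegree ≠ 0 := fun h0 => h (derivative_of_natDegree_zero h0)
  rw [splits_iff_card_roots]
  omega

open Polynomial in
lemma my_splits_iterate_derivative (m : ℕ) {p : ℝ[X]} (hp : p.Splits) :
    (derivative^[m] p).Splits := by
  induction m with
  | zero => exact hp
  | succ m ih => rw [Function.iterate_succ_apply']; exact my_splits_derivative ih

open Polynomial in
lemma my_reverse_multiset_prod (s : Multiset ℝ[X]) :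
    s.prod.reverse = (s.map reverse).prod := by
  induction s using Multiset.induction with
  | empty => simp [reverse, reflect_one]
  | cons a s ih => simp [Multiset.prod_cons, reverse_mul_of_domain, ih]

open Polynomial in
lemma my_splits_multiset_prod (s : Multiset ℝ[X]) (h : ∀ q ∈ s, q.Splits) :
    s.prod.Splits := by
  induction s using Multiset.induction with
  | empty => simp [Splits.one]
  | cons a s ih =>
      rw [Multiset.prod_cons]
      exact Splits.mul (h a (Multiset.mem_cons_self a s))
        (ih fun q hq => h q (Multiset.mem_cons_of_mem hq))

open Polynomial in
lemma my_splits_reverse {p : ℝ[X]} (hp : p.Splits) :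
    p.reverse.Splits := by
  have hfac := Splits.eq_prod_roots hp
  have hrw : p.reverse
      = (C p.leadingCoeff).reverse * ((p.roots.map (fun a => X - C a)).map reverse).prod := by
    rw [← my_reverse_multiset_prod, ← reverse_mul_of_domain, ← hfac]
  rw [hrw]
  refine Splits.mul (Splits.of_natDegree_le_one ?_) (my_splits_multiset_prod _ ?_)
  · exact (reverse_natDegree_le _).trans (by simp)
  · intro q hq
    simp only [Multiset.mem_map] at hq
    obtain ⟨a, ⟨b, -, rfl⟩, rfl⟩ := hq
    exact Splits.of_natDegree_le_one ((reverse_natDegree_le _).trans (by simp))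

lemma esymm_zero_eq_one (n : ℕ) (x : Fin n → ℝ) : esymm n 0 x = 1 := by
  simp [esymm]

lemma esymm_eq_zero_of_lt {n k : ℕ} (h : n < k) (x : Fin n → ℝ) : esymm n k x = 0 := by
  rw [esymm, Finset.powersetCard_eq_empty.2 (by simpa using h), Finset.sum_empty]

lemma descFactorial_cast_pos {a b : ℕ} (h : b ≤ a) : (0 : ℝ) < a.descFactorial b := by
  have : a.descFactorial b ≠ 0 := fun hh =>
    absurd (Nat.descFactorial_eq_zero_iff_lt.1 hh) (by omega)
  exact_mod_cast Nat.pos_of_ne_zero this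

set_option maxHeartbeats 1000000 in
open Polynomial in
lemma newton_at_zero (m k : ℕ) (hk2 : 2 ≤ k) (μ : Fin m → ℝ)
    (h1 : esymm m (k - 1) μ = 0) (hpos : 0 < esymm m (k - 2) μ) :
    esymm m k μ ≤ 0 := by
  rcases lt_or_ge m k with hmk | hkm
  · rw [esymm_eq_zero_of_lt hmk]
  rcases eq_or_ne (esymm m k μ) 0 with h0 | h0
  · rw [h0]
  set P : ℝ[X] := ∏ i : Fin m, (X + C (μ i)) with hP
  have hPdeg : P.natDegree = m := by
    rw [hP, natDegree_prod_of_monic _ _ (fun i _ => monic_X_add_C _)]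
    simp [natDegree_X_add_C]
  have hPsplits : P.Splits :=
    Splits.prod fun i _ => Splits.of_natDegree_le_one (by simp [natDegree_X_add_C])
  have hPcoeff : ∀ j, j ≤ m → P.coeff (m - j) = esymm m j μ := by
    intro j hj
    rw [hP, Finset.prod_X_add_C_coeff _ _ (by simpa using Nat.sub_le m j)]
    simp only [Finset.card_univ, Fintype.card_fin, Nat.sub_sub_self hj]
    rfl
  set Q : ℝ[X] := derivative^[m - k] P with hQ
  have hQcoeff : ∀ t : ℕ,
      Q.coeff t = ((t + (m - k)).descFactorial (m - k) : ℝ) * P.coeff (t + (m - k)) := by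
    intro t
    rw [hQ, coeff_iterate_derivative, nsmul_eq_mul]
  have hQ0 : Q.coeff 0 = ((m - k).descFactorial (m - k) : ℝ) * esymm m k μ := by
    rw [hQcoeff 0, show 0 + (m - k) = m - k from by omega]
    rw [hPcoeff k hkm]
  have hQ1 : Q.coeff 1 = 0 := by
    rw [hQcoeff 1, show 1 + (m - k) = m - (k - 1) from by omega,
      hPcoeff (k - 1) (by omega), h1, mul_zero]
  have hQ2 : Q.coeff 2 = ((2 + (m - k)).descFactorial (m - k) : ℝ) * esymm m (k - 2) μ := by
    rw [hQcoeff 2, show 2 + (m - k) = m - (k - 2) from by omega, hPcoeff (k - 2) (by omega)]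
  have hQ0ne : Q.coeff 0 ≠ 0 := by
    rw [hQ0]
    exact mul_ne_zero (ne_of_gt (descFactorial_cast_pos le_rfl)) h0
  have hQk : Q.coeff k = (m.descFactorial (m - k) : ℝ) := by
    rw [hQcoeff k, show k + (m - k) = m - 0 from by omega, hPcoeff 0 (by omega),
      esymm_zero_eq_one, mul_one]
    norm_num
  have hQtop : ∀ t : ℕ, k < t → Q.coeff t = 0 := by
    intro t ht
    rw [hQcoeff t, coeff_eq_zero_of_natDegree_lt (by omega), mul_zero]
  have hQdeg : Q.natDegree = k := by
    refine le_antisymm (natDegree_le_iff_coeff_eq_zero.2 hQtop) (le_natDegree_of_ne_zero ?_)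
    rw [hQk]
    exact ne_of_gt (descFactorial_cast_pos (Nat.sub_le m k))
  have hQsplits : Q.Splits := my_splits_iterate_derivative _ hPsplits
  set R : ℝ[X] := Q.reverse with hR
  have hRdeg : R.natDegree = k := by
    rw [hR, reverse_natDegree, hQdeg,
      Polynomial.natTrailingDegree_eq_zero.2 (Or.inr hQ0ne), Nat.sub_zero]
  have hRcoeff : ∀ t : ℕ, t ≤ k → R.coeff t = Q.coeff (k - t) := by
    intro t ht
    rw [hR, coeff_reverse, hQdeg, revAt_le ht]
  have hRsplits : R.Splits := my_splits_reverse hQsplits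
  set S : ℝ[X] := derivative^[k - 2] R with hS
  have hSsplits : S.Splits := my_splits_iterate_derivative _ hRsplits
  have hScoeff : ∀ t : ℕ,
      S.coeff t = ((t + (k - 2)).descFactorial (k - 2) : ℝ) * R.coeff (t + (k - 2)) := by
    intro t
    rw [hS, coeff_iterate_derivative, nsmul_eq_mul]
  have hS2 : S.coeff 2 = (k.descFactorial (k - 2) : ℝ) * Q.coeff 0 := by
    rw [hScoeff 2, show 2 + (k - 2) = k from by omega, hRcoeff k le_rfl, Nat.sub_self]
  have hS1 : S.coeff 1 = 0 := by
    rw [hScoeff 1, hRcoeff (1 + (k - 2)) (by omega),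
      show k - (1 + (k - 2)) = 1 from by omega, hQ1, mul_zero]
  have hS0 : S.coeff 0 = (((k - 2)).descFactorial (k - 2) : ℝ) * Q.coeff 2 := by
    rw [hScoeff 0, show 0 + (k - 2) = k - 2 from by omega, hRcoeff (k - 2) (by omega),
      show k - (k - 2) = 2 from by omega]
  have hS2ne : S.coeff 2 ≠ 0 := by
    rw [hS2]
    exact mul_ne_zero (ne_of_gt (descFactorial_cast_pos (by omega))) hQ0ne
  have hSne : S ≠ 0 := fun h => hS2ne (by simp [h])
  have hSdeg : S.natDegree = 2 := by
    refine le_antisymm (natDegree_le_iff_coeff_eq_zero.2 ?_) (le_natDegree_of_ne_zero hS2ne)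
    intro t ht
    rw [hScoeff t, coeff_eq_zero_of_natDegree_lt (by omega), mul_zero]
  have hSdegne : S.degree ≠ 0 := by
    rw [degree_eq_natDegree hSne, hSdeg]
    exact_mod_cast (by norm_num : ((2 : ℕ) : WithBot ℕ) ≠ 0)
  obtain ⟨x, hx⟩ := Splits.exists_eval_eq_zero hSsplits hSdegne
  have hxe : S.eval x = 0 := hx
  have heval : S.eval x = S.coeff 0 + S.coeff 1 * x + S.coeff 2 * x ^ 2 := by
    rw [eval_eq_sum_range' (show S.natDegree < 3 by omega)]
    rw [Finset.sum_range_succ, Finset.sum_range_succ, Finset.sum_range_one]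
    ring
  have hq : S.coeff 2 * (x * x) + S.coeff 1 * x + S.coeff 0 = 0 := by
    rw [heval] at hxe
    linear_combination hxe
  have hdis := (quadratic_eq_zero_iff_discrim_eq_sq hS2ne x).1 hq
  have hdisnn : 0 ≤ discrim (S.coeff 2) (S.coeff 1) (S.coeff 0) := hdis ▸ sq_nonneg _
  rw [discrim, hS1, hS2, hS0] at hdisnn
  have c1 := descFactorial_cast_pos (show k - 2 ≤ k by omega)
  have c2 := descFactorial_cast_pos (le_refl (m - k))
  have c3 := descFactorial_cast_pos (le_refl (k - 2))
  have c4 := descFactorial_cast_pos (show m - k ≤ 2 + (m - k) by omega)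
  have hac : Q.coeff 0 * Q.coeff 2 ≤ 0 := by nlinarith [mul_pos c1 c3]
  rw [hQ0, hQ2] at hac
  have hsig : esymm m k μ * esymm m (k - 2) μ ≤ 0 := by nlinarith [mul_pos c2 c4]
  nlinarith [hpos, hsig]

lemma esymmDel_eq_esymm_comp (n j : ℕ) (x : Fin (n + 1) → ℝ) (i : Fin (n + 1)) :
    esymmDel (n + 1) j x i = esymm n j (x ∘ i.succAbove) := by
  have herase : (Finset.univ : Finset (Fin (n + 1))).erase i
      = (Finset.univ : Finset (Fin n)).map i.succAboveEmb := by
    rw [Fin.univ_succAbove n i, Finset.erase_cons]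
  rw [esymmDel, herase, Finset.powersetCard_map, Finset.sum_map, esymm]
  refine Finset.sum_congr rfl fun s _ => ?_
  rw [RelEmbedding.coe_toEmbedding, Finset.mapEmbedding_apply, Finset.prod_map]
  rfl

lemma esymm_succ_del (n k : ℕ) (x : Fin n → ℝ) (i : Fin n) :
    esymm n (k + 1) x = esymmDel n (k + 1) x i + x i * esymmDel n k x i := by
  classical
  have hins : (Finset.univ : Finset (Fin n)) = insert i (Finset.univ.erase i) :=
    (Finset.insert_erase (Finset.mem_univ i)).symm
  have hdisj : Disjoint ((Finset.univ.erase i).powersetCard (k + 1))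
      (((Finset.univ.erase i).powersetCard k).image (insert i)) := by
    rw [Finset.disjoint_left]
    intro s hs hs'
    have h1 : i ∉ s := fun hi =>
      (Finset.notMem_erase i _) ((Finset.mem_powersetCard.1 hs).1 hi)
    obtain ⟨u, -, rfl⟩ := Finset.mem_image.1 hs'
    exact h1 (Finset.mem_insert_self i u)
  rw [esymm]
  conv_lhs => rw [hins]
  rw [Finset.powersetCard_succ_insert (Finset.notMem_erase i _), Finset.sum_union hdisj]
  rw [Finset.sum_image (fun u hu v hv huv => ?_), esymmDel, esymmDel]
  · congr 1
    rw [Finset.mul_sum]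
    refine Finset.sum_congr rfl fun u hu => ?_
    have hiu : i ∉ u := fun hi =>
      (Finset.notMem_erase i _) ((Finset.mem_powersetCard.1 hu).1 hi)
    rw [Finset.prod_insert hiu]
  · have hiu : i ∉ u := fun hi =>
      (Finset.notMem_erase i _) ((Finset.mem_powersetCard.1 hu).1 hi)
    have hiv : i ∉ v := fun hi =>
      (Finset.notMem_erase i _) ((Finset.mem_powersetCard.1 hv).1 hi)
    ext a
    constructor
    · intro ha
      have := Finset.mem_insert.1 (huv ▸ Finset.mem_insert_of_mem ha : a ∈ insert i v)
      rcases this with rfl | h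
      · exact absurd ha hiu
      · exact h
    · intro ha
      have := Finset.mem_insert.1 (huv.symm ▸ Finset.mem_insert_of_mem ha : a ∈ insert i u)
      rcases this with rfl | h
      · exact absurd ha hiv
      · exact h

lemma card_filter_supersets {n j : ℕ} (u : Finset (Fin n)) (hu : u.card ≤ j) :
    ((((Finset.univ : Finset (Fin n)).powersetCard j).filter (fun s => u ⊆ s)).card)
      = (n - u.card).choose (j - u.card) := by
  classical
  have hcompl : (uᶜ : Finset (Fin n)).card = n - u.card := by
    rw [Finset.card_compl, Fintype.card_fin]
  rw [← hcompl, ← Finset.card_powersetCard]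
  refine Finset.card_bij' (fun s _ => s \ u) (fun v _ => v ∪ u) ?_ ?_ ?_ ?_
  · intro s hs
    rw [Finset.mem_filter, Finset.mem_powersetCard] at hs
    obtain ⟨⟨-, hcard⟩, hsub⟩ := hs
    rw [Finset.mem_powersetCard]
    refine ⟨fun a ha => ?_, ?_⟩
    · rw [Finset.mem_compl]
      exact (Finset.mem_sdiff.1 ha).2
    · rw [Finset.card_sdiff_of_subset hsub, hcard]
  · intro v hv
    rw [Finset.mem_powersetCard] at hv
    obtain ⟨hsub, hcard⟩ := hv
    have hdisj : Disjoint v u := fun w hwv hwu a ha => by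
      have h1 := hsub (hwv ha)
      have h2 := hwu ha
      rw [Finset.mem_compl] at h1
      exact absurd h2 h1
    rw [Finset.mem_filter, Finset.mem_powersetCard]
    refine ⟨⟨Finset.subset_univ _, ?_⟩, Finset.subset_union_right⟩
    rw [Finset.card_union_of_disjoint hdisj, hcard]
    omega
  · intro s hs
    rw [Finset.mem_filter] at hs
    exact Finset.sdiff_union_of_subset hs.2
  · intro v hv
    rw [Finset.mem_powersetCard] at hv
    have hdisj : Disjoint v u := fun w hwv hwu a ha => by
      have h1 := hv.1 (hwv ha)
      have h2 := hwu ha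
      rw [Finset.mem_compl] at h1
      exact absurd h2 h1
    exact Finset.union_sdiff_cancel_right hdisj

lemma shift_mem_gardingCone {n k : ℕ} (hkn : k ≤ n) {x : Fin n → ℝ}
    (hx : x ∈ gardingCone n k) {t : ℝ} (ht : 0 ≤ t) :
    (fun a => x a + t) ∈ gardingCone n k := by
  classical
  intro j hj1 hjk
  have hjn : j ≤ n := le_trans hjk hkn
  have step1 : esymm n j (fun a => x a + t)
      = ∑ s ∈ (Finset.univ : Finset (Fin n)).powersetCard j, ∑ u ∈ s.powerset,
          (∏ a ∈ u, x a) * t ^ (j - u.card) := by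
    rw [esymm]
    refine Finset.sum_congr rfl fun s hs => ?_
    have hcard : s.card = j := (Finset.mem_powersetCard.1 hs).2
    rw [Finset.prod_add]
    refine Finset.sum_congr rfl fun u hu => ?_
    rw [Finset.prod_const, Finset.card_sdiff_of_subset (Finset.mem_powerset.1 hu), hcard]
  have step2 : esymm n j (fun a => x a + t)
      = ∑ u ∈ (Finset.univ : Finset (Fin n)).powerset,
          ((((Finset.univ : Finset (Fin n)).powersetCard j).filter
            (fun s => u ⊆ s)).card : ℝ) * ((∏ a ∈ u, x a) * t ^ (j - u.card)) := by
    rw [step1, Finset.sum_comm' (t' := (Finset.univ : Finset (Fin n)).powerset)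
      (s' := fun u => ((Finset.univ : Finset (Fin n)).powersetCard j).filter (fun s => u ⊆ s))
      (by
        intro s u
        simp only [Finset.mem_powerset, Finset.mem_filter, Finset.subset_univ, and_true,
          true_and])]
    refine Finset.sum_congr rfl fun u _ => ?_
    rw [Finset.sum_const, nsmul_eq_mul]
  have step3 : esymm n j (fun a => x a + t)
      = ∑ r ∈ Finset.range (n + 1), ∑ u ∈ (Finset.univ : Finset (Fin n)).powersetCard r,
          ((((Finset.univ : Finset (Fin n)).powersetCard j).filter
            (fun s => u ⊆ s)).card : ℝ) * ((∏ a ∈ u, x a) * t ^ (j - u.card)) := by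
    rw [step2]
    rw [Finset.powerset_card_disjiUnion]
    exact (Finset.sum_disjiUnion _ _ _).trans (by simp only [Finset.card_univ, Fintype.card_fin])
  rw [step3]
  have hterm : ∀ r ∈ Finset.range (n + 1),
      (∑ u ∈ (Finset.univ : Finset (Fin n)).powersetCard r,
          ((((Finset.univ : Finset (Fin n)).powersetCard j).filter
            (fun s => u ⊆ s)).card : ℝ) * ((∏ a ∈ u, x a) * t ^ (j - u.card)))
      = if r ≤ j then ((n - r).choose (j - r) : ℝ) * t ^ (j - r) * esymm n r x else 0 := by
    intro r _
    by_cases hrj : r ≤ j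
    · rw [if_pos hrj, esymm, Finset.mul_sum]
      refine Finset.sum_congr rfl fun u hu => ?_
      have hucard : u.card = r := (Finset.mem_powersetCard.1 hu).2
      rw [card_filter_supersets u (hucard ▸ hrj), hucard]
      ring
    · rw [if_neg hrj]
      refine Finset.sum_eq_zero fun u hu => ?_
      have hucard : u.card = r := (Finset.mem_powersetCard.1 hu).2
      have : (((Finset.univ : Finset (Fin n)).powersetCard j).filter
          (fun s => u ⊆ s)) = ∅ := by
        refine Finset.filter_eq_empty_iff.2 fun s hs hsub => ?_
        have := Finset.card_le_card hsub
        rw [hucard, (Finset.mem_powersetCard.1 hs).2] at this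
        omega
      rw [this]
      simp
  rw [Finset.sum_congr rfl hterm]
  refine Finset.sum_pos' (fun r _ => ?_) ⟨j, Finset.mem_range.2 (by omega), ?_⟩
  · by_cases hrj : r ≤ j
    · rw [if_pos hrj]
      rcases Nat.eq_zero_or_pos r with rfl | hr
      · rw [esymm_zero_eq_one]
        positivity
      · have := hx r hr (le_trans hrj hjk)
        positivity
    · rw [if_neg hrj]
  · have h := hx j hj1 hjk
    rw [if_pos le_rfl]
    simpa using h

lemma newton_del {n k : ℕ} (hk2 : 2 ≤ k) (y : Fin n → ℝ) (i : Fin n)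
    (h1 : esymmDel n (k - 1) y i = 0) (h2 : 0 < esymmDel n (k - 2) y i) :
    esymmDel n k y i ≤ 0 := by
  have hn : n ≠ 0 := fun h => (h ▸ i).elim0
  obtain ⟨m, rfl⟩ : ∃ m, n = m + 1 := ⟨n - 1, by omega⟩
  rw [esymmDel_eq_esymm_comp] at h1 h2 ⊢
  exact newton_at_zero m k hk2 _ h1 h2

lemma gardingCone_anti {n k : ℕ} {x : Fin n → ℝ} (hx : x ∈ gardingCone n (k + 1)) :
    x ∈ gardingCone n k :=
  fun j hj1 hjk => hx j hj1 (le_trans hjk (Nat.le_succ k))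

lemma main_aux : ∀ k n : ℕ, 1 ≤ k → k ≤ n → ∀ x : Fin n → ℝ, x ∈ gardingCone n k →
    ∀ i : Fin n, 0 < esymmDel n (k - 1) x i := by
  intro k
  induction k with
  | zero => intro n h; omega
  | succ k ih =>
    intro n _ hkn x hx i
    rcases Nat.eq_zero_or_pos k with rfl | hk1
    · have : esymmDel n 0 x i = 1 := by simp [esymmDel]
      simpa [this] using one_pos
    simp only [Nat.add_sub_cancel]
    set g : ℝ → ℝ := fun t => esymmDel n k (fun a => x a + t) i with hg
    have hcont : Continuous g := by
      rw [hg]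
      simp only [esymmDel]
      exact continuous_finset_sum _ fun s _ =>
        continuous_finset_prod _ fun a _ => continuous_const.add continuous_id
    set T : ℝ := 1 + ∑ a, |x a| with hT
    have hsumnn : (0 : ℝ) ≤ ∑ a, |x a| :=
      Finset.sum_nonneg fun a _ => abs_nonneg _
    have hTnn : (0 : ℝ) ≤ T := by rw [hT]; linarith
    have hentry : ∀ a : Fin n, 0 < x a + T := by
      intro a
      have h1 : |x a| ≤ ∑ b, |x b| :=
        Finset.single_le_sum (fun b _ => abs_nonneg (x b)) (Finset.mem_univ a)
      have h2 : -x a ≤ |x a| := neg_le_abs (x a)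
      rw [hT]; linarith
    have hgT : 0 < g T := by
      rw [hg]
      simp only [esymmDel]
      refine Finset.sum_pos (fun s hs => Finset.prod_pos fun a _ => hentry a) ?_
      refine Finset.powersetCard_nonempty.2 ?_
      rw [Finset.card_erase_of_mem (Finset.mem_univ i), Finset.card_univ, Fintype.card_fin]
      omega
    have hne : ∀ t : ℝ, 0 ≤ t → g t ≠ 0 := by
      intro t ht h0
      have h0' : esymmDel n k (fun a => x a + t) i = 0 := h0
      have hyG : (fun a => x a + t) ∈ gardingCone n (k + 1) :=
        shift_mem_gardingCone hkn hx ht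
      have hIH : 0 < esymmDel n (k - 1) (fun a => x a + t) i :=
        ih n hk1 (by omega) _ (gardingCone_anti hyG) i
      have hnewton : esymmDel n (k + 1) (fun a => x a + t) i ≤ 0 :=
        newton_del (by omega) _ i h0' hIH
      have hpos : 0 < esymm n (k + 1) (fun a => x a + t) := hyG (k + 1) (by omega) le_rfl
      rw [esymm_succ_del n k _ i, h0', mul_zero, add_zero] at hpos
      linarith
    by_contra hle
    push_neg at hle
    have hg0 : g 0 = esymmDel n k x i := by rw [hg]; simp only [add_zero]
    have hlt : g 0 < 0 := lt_of_le_of_ne (hg0 ▸ hle) (hne 0 le_rfl)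
    obtain ⟨t, htmem, htz⟩ := intermediate_value_Icc hTnn hcont.continuousOn
      (Set.mem_Icc.2 ⟨hlt.le, hgT.le⟩)
    exact hne t htmem.1 htz

/-- If λ ∈ Γ_k then σ_{k-1}(λ|i) > 0 for every 1 ≤ i ≤ n. -/
theorem esymmDel_pos_of_mem_gardingCone (n k : ℕ) (hk1 : 1 ≤ k) (hkn : k ≤ n)
    (x : Fin n → ℝ) (hx : x ∈ gardingCone n k) (i : Fin n) :
    0 < esymmDel n (k - 1) x i :=
  main_aux k n hk1 hkn x hx i
end

section
/- For λ ∈ Γ_k and 0 ≤ l < k ≤ n, the function λ ↦ [σ_k(λ)/σ_l(λ)]^{1/(k-l)} is concave on the Garding cone Γ_k. -/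
open Finset

open Finset Polynomial

namespace HQC

variable {n : ℕ}

noncomputable def es (A : Finset (Fin n)) (k : ℕ) (x : Fin n → ℝ) : ℝ :=
  ∑ s ∈ A.powersetCard k, ∏ i ∈ s, x i

lemma es_zero (A : Finset (Fin n)) (x : Fin n → ℝ) : es A 0 x = 1 := by simp [es]

lemma es_of_card_lt {A : Finset (Fin n)} {k : ℕ} (h : A.card < k) (x : Fin n → ℝ) :
    es A k x = 0 := by
  simp [es, Finset.powersetCard_eq_empty.2 h]

lemma es_one (A : Finset (Fin n)) (x : Fin n → ℝ) : es A 1 x = ∑ i ∈ A, x i := by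
  simp [es, powersetCard_one]

/-- The polynomial ∏_{i∈A} (X + x i). -/
noncomputable def pa (A : Finset (Fin n)) (x : Fin n → ℝ) : Polynomial ℝ :=
  ∏ i ∈ A, (X + C (x i))

lemma pa_coeff {A : Finset (Fin n)} (x : Fin n → ℝ) {j : ℕ} (hj : j ≤ A.card) :
    (pa A x).coeff (A.card - j) = es A j x := by
  rw [pa, Finset.prod_X_add_C_coeff A x (Nat.sub_le _ _), Nat.sub_sub_self hj]; rfl

lemma pa_eq_multiset_prod (A : Finset (Fin n)) (x : Fin n → ℝ) :
    pa A x = (Multiset.map (fun a => X - C a) (A.val.map (fun i => -(x i)))).prod := by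
  rw [pa, Finset.prod_eq_multiset_prod, Multiset.map_map]
  congr 1
  apply Multiset.map_congr rfl
  intro i _
  simp [sub_neg_eq_add]

lemma pa_monic (A : Finset (Fin n)) (x : Fin n → ℝ) : (pa A x).Monic :=
  monic_prod_of_monic _ _ fun i _ => monic_X_add_C (x i)

lemma pa_natDegree (A : Finset (Fin n)) (x : Fin n → ℝ) : (pa A x).natDegree = A.card := by
  rw [pa_eq_multiset_prod, natDegree_multiset_prod_X_sub_C_eq_card, Multiset.card_map]
  rfl

lemma pa_roots_card (A : Finset (Fin n)) (x : Fin n → ℝ) :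
    Multiset.card (pa A x).roots = A.card := by
  rw [pa_eq_multiset_prod, roots_multiset_prod_X_sub_C, Multiset.card_map]
  rfl

/-- pointwise log-concavity of real-rooted polynomials -/
lemma w1 (s : Multiset ℝ) (t : ℝ) :
    eval t (Multiset.map (fun a => X - C a) s).prod *
      eval t (derivative (derivative (Multiset.map (fun a => X - C a) s).prod)) ≤
    (eval t (derivative (Multiset.map (fun a => X - C a) s).prod)) ^ 2 := by
  induction s using Multiset.induction with
  | empty => simp
  | cons r s ih =>
    set q := (Multiset.map (fun a => X - C a) s).prod with hq
    have h1 : derivative ((X - C r) * q) = q + (X - C r) * derivative q := by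
      rw [derivative_mul]; simp
    have h2 : derivative (q + (X - C r) * derivative q)
        = 2 * derivative q + (X - C r) * derivative (derivative q) := by
      rw [derivative_add, derivative_mul]; simp; ring
    simp only [Multiset.map_cons, Multiset.prod_cons, ← hq, h1, h2]
    simp only [eval_add, eval_mul, eval_sub, eval_X, eval_C, eval_ofNat]
    nlinarith [ih, sq_nonneg (eval t q), sq_nonneg (t - r),
      mul_le_mul_of_nonneg_left ih (sq_nonneg (t - r))]

lemma iter_fact {N : ℕ} {p : Polynomial ℝ} (hm : p.Monic) (hdeg : p.natDegree = N)
    (hroots : Multiset.card p.roots = N) :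
    ∀ r : ℕ, r ≤ N →
    ∃ (c : ℝ) (s : Multiset ℝ), c ≠ 0 ∧ Multiset.card s = N - r ∧
      derivative^[r] p = C c * (Multiset.map (fun a => X - C a) s).prod := by
  intro r
  induction r with
  | zero =>
    intro _
    refine ⟨1, p.roots, one_ne_zero, by simpa using hroots, ?_⟩
    have hsp : Splits p := splits_iff_card_roots.2 (hroots.trans hdeg.symm)
    have := hsp.eq_prod_roots
    rw [hm.leadingCoeff] at this
    simpa using this
  | succ r ih =>
    intro hr
    obtain ⟨c, s, hc, hcard, heq⟩ := ih (Nat.le_of_succ_le hr)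
    set Q := (Multiset.map (fun a => X - C a) s).prod with hQdef
    have hQmonic : Q.Monic := monic_multiset_prod_of_monic _ _ fun a _ => monic_X_sub_C a
    have hQdeg : Q.natDegree = N - r := by
      rw [hQdef, natDegree_multiset_prod_X_sub_C_eq_card, hcard]
    have hQroots : Q.roots = s := roots_multiset_prod_X_sub_C s
    have hNr : 1 ≤ N - r := by omega
    -- derivative of Q is nonzero
    have hQdeg0 : Q.natDegree ≠ 0 := by omega
    have hdQne : derivative Q ≠ 0 := by
      intro h0
      have hcd := Q.coeff_derivative (N - r - 1)
      rw [h0, coeff_zero] at hcd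
      have h1 : Q.coeff (N - r - 1 + 1) = 1 := by
        have he : N - r - 1 + 1 = Q.natDegree := by omega
        rw [he, hQmonic.coeff_natDegree]
      rw [h1, one_mul] at hcd
      have hpos : (0:ℝ) < ((N - r - 1 : ℕ) : ℝ) + 1 := by positivity
      rw [← hcd] at hpos
      exact lt_irrefl 0 hpos
    have hdQdeg : (derivative Q).natDegree = N - r - 1 := by
      have hlt := natDegree_derivative_lt hQdeg0
      have hge : N - r - 1 ≤ Multiset.card (derivative Q).roots := by
        have := card_roots_le_derivative Q
        rw [hQroots, hcard] at this
        omega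
      have hle := card_roots' (derivative Q)
      omega
    have hcardroots : Multiset.card (derivative Q).roots = (derivative Q).natDegree := by
      have hge : N - r - 1 ≤ Multiset.card (derivative Q).roots := by
        have := card_roots_le_derivative Q
        rw [hQroots, hcard] at this
        omega
      have hle := card_roots' (derivative Q)
      omega
    have hsp : Splits (derivative Q) := splits_iff_card_roots.2 hcardroots
    have hfact := hsp.eq_prod_roots
    refine ⟨c * (derivative Q).leadingCoeff, (derivative Q).roots,
      mul_ne_zero hc (leadingCoeff_ne_zero.2 hdQne), ?_, ?_⟩
    · rw [hcardroots, hdQdeg]; omega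
    · rw [Function.iterate_succ_apply', heq, derivative_C_mul, hfact, ← hfact, map_mul,
        mul_assoc, ← hfact]

lemma newton_weak (A : Finset (Fin n)) (x : Fin n → ℝ) {j : ℕ} (hj : 2 ≤ j)
    (h0 : es A (j - 1) x = 0) : es A j x * es A (j - 2) x ≤ 0 := by
  set N := A.card with hN
  by_cases hNj : N < j
  · rw [es_of_card_lt hNj]; simp
  push_neg at hNj
  obtain ⟨c, s, hc, hcard, heq⟩ :=
    iter_fact (pa_monic A x) (pa_natDegree A x) (pa_roots_card A x) (N - j) (Nat.sub_le _ _)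
  set Q := (Multiset.map (fun a => X - C a) s).prod with hQdef
  -- evaluations at 0 of derivative^[N-j], ^[N-j+1], ^[N-j+2]
  have e0 : (derivative^[N - j] (pa A x)).coeff 0
      = ((N - j).descFactorial (N - j) : ℝ) * es A j x := by
    rw [coeff_iterate_derivative, nsmul_eq_mul, zero_add,
      pa_coeff x (by omega : j ≤ A.card)]
  have e1 : (derivative^[N - j + 1] (pa A x)).coeff 0 = 0 := by
    rw [coeff_iterate_derivative, nsmul_eq_mul]
    have : (0 + (N - j + 1)) = N - (j - 1) := by omega
    rw [this, pa_coeff x (by omega : j - 1 ≤ A.card), h0, mul_zero]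
  have e2 : (derivative^[N - j + 2] (pa A x)).coeff 0
      = ((N - j + 2).descFactorial (N - j + 2) : ℝ) * es A (j - 2) x := by
    rw [coeff_iterate_derivative, nsmul_eq_mul, zero_add,
      show N - j + 2 = N - (j - 2) by omega,
      pa_coeff x (by omega : j - 2 ≤ A.card)]
  -- use w1
  have key := w1 s 0
  have hd1 : derivative^[N - j + 1] (pa A x) = C c * derivative Q := by
    rw [show N - j + 1 = (N - j) + 1 by rfl, Function.iterate_succ_apply', heq,
      derivative_C_mul]
  have hd2 : derivative^[N - j + 2] (pa A x) = C c * derivative (derivative Q) := by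
    rw [show N - j + 2 = (N - j + 1) + 1 by rfl, Function.iterate_succ_apply', hd1,
      derivative_C_mul]
  have k0 : (derivative^[N - j] (pa A x)).coeff 0 = c * eval 0 Q := by
    rw [coeff_zero_eq_eval_zero, heq]; simp
  have k1 : (derivative^[N - j + 1] (pa A x)).coeff 0 = c * eval 0 (derivative Q) := by
    rw [coeff_zero_eq_eval_zero, hd1]; simp
  have k2 : (derivative^[N - j + 2] (pa A x)).coeff 0 = c * eval 0 (derivative (derivative Q)) := by
    rw [coeff_zero_eq_eval_zero, hd2]; simp
  -- combine
  have hc2 : (0:ℝ) < c ^ 2 := by positivity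
  have main : (c * eval 0 Q) * (c * eval 0 (derivative (derivative Q)))
      ≤ (c * eval 0 (derivative Q)) ^ 2 := by nlinarith [key]
  rw [← k0, ← k2, e0, e2, ← k1, e1] at main
  have hD0 : (0:ℝ) < ((N - j).descFactorial (N - j) : ℝ) := by
    have := Nat.factorial_pos (N - j)
    rw [Nat.descFactorial_self]
    exact_mod_cast this
  have hD2 : (0:ℝ) < ((N - j + 2).descFactorial (N - j + 2) : ℝ) := by
    have := Nat.factorial_pos (N - j + 2)
    rw [Nat.descFactorial_self]
    exact_mod_cast this
  by_contra hcon
  push_neg at hcon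
  have hprod := mul_pos (mul_pos hD0 hD2) hcon
  nlinarith [main]

def GC (A : Finset (Fin n)) (k : ℕ) : Set (Fin n → ℝ) :=
  {x | ∀ j, 1 ≤ j → j ≤ k → 0 < es A j x}


lemma GC_mono {A : Finset (Fin n)} {j k : ℕ} (h : j ≤ k) : GC A k ⊆ GC A j :=
  fun _ hx m h1 h2 => hx m h1 (h2.trans h)

lemma es_pos {A : Finset (Fin n)} {k : ℕ} {x : Fin n → ℝ} (hx : x ∈ GC A k) {j : ℕ}
    (hj : j ≤ k) : 0 < es A j x := by
  rcases Nat.eq_zero_or_pos j with rfl | hj0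
  · rw [es_zero]; norm_num
  · exact hx j hj0 hj

lemma card_ge {A : Finset (Fin n)} {k : ℕ} {x : Fin n → ℝ} (hk : 1 ≤ k) (hx : x ∈ GC A k) :
    k ≤ A.card := by
  by_contra h
  push_neg at h
  have := hx k hk le_rfl
  rw [es_of_card_lt h] at this
  exact lt_irrefl _ this

lemma es_mul (A : Finset (Fin n)) (j : ℕ) (c : ℝ) (x : Fin n → ℝ) :
    es A j (fun i => c * x i) = c ^ j * es A j x := by
  rw [es, es, Finset.mul_sum]
  apply Finset.sum_congr rfl
  intro s hs
  rw [Finset.prod_mul_distrib, Finset.prod_const, (Finset.mem_powersetCard.1 hs).2]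

lemma es_ones (A : Finset (Fin n)) (j : ℕ) :
    es A j (fun _ => (1 : ℝ)) = (A.card.choose j : ℝ) := by
  simp [es, Finset.card_powersetCard]

lemma es_insert {A : Finset (Fin n)} {i : Fin n} (hi : i ∉ A) (k : ℕ) (x : Fin n → ℝ) :
    es (insert i A) (k + 1) x = es A (k + 1) x + x i * es A k x := by
  rw [es, Finset.powersetCard_succ_insert hi, Finset.sum_union, es, es, Finset.mul_sum,
    Finset.sum_image]
  · congr 1
    apply Finset.sum_congr rfl
    intro s hs
    have hsi : i ∉ s := fun hmem =>
      hi ((Finset.mem_powersetCard.1 hs).1 hmem)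
    rw [Finset.prod_insert hsi]
  · intro s hs t ht hst
    have hsi : i ∉ s := fun hmem => hi ((Finset.mem_powersetCard.1 hs).1 hmem)
    have hti : i ∉ t := fun hmem => hi ((Finset.mem_powersetCard.1 ht).1 hmem)
    have := congrArg (fun u => Finset.erase u i) hst
    simpa [Finset.erase_insert hsi, Finset.erase_insert hti] using this
  · rw [Finset.disjoint_left]
    intro s hs hs'
    obtain ⟨t, ht, rfl⟩ := Finset.mem_image.1 hs'
    have : i ∈ insert i t := Finset.mem_insert_self _ _
    exact (fun hmem => hi ((Finset.mem_powersetCard.1 hs).1 hmem)) this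

lemma es_erase {A : Finset (Fin n)} {i : Fin n} (hi : i ∈ A) (k : ℕ) (x : Fin n → ℝ) :
    es A (k + 1) x = es (A.erase i) (k + 1) x + x i * es (A.erase i) k x := by
  conv_lhs => rw [← Finset.insert_erase hi]
  exact es_insert (Finset.notMem_erase i A) k x

lemma sum_es_erase (A : Finset (Fin n)) (k : ℕ) (x : Fin n → ℝ) :
    ∑ i ∈ A, x i * es (A.erase i) k x = (k + 1 : ℝ) * es A (k + 1) x := by
  have lhs_eq : ∑ i ∈ A, x i * es (A.erase i) k x
      = ∑ p ∈ A.sigma (fun i => (A.erase i).powersetCard k), ∏ j ∈ insert p.1 p.2, x j := by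
    rw [Finset.sum_sigma]
    apply Finset.sum_congr rfl
    intro i hi
    rw [es, Finset.mul_sum]
    apply Finset.sum_congr rfl
    intro s hs
    have hsi : i ∉ s := fun hmem =>
      (Finset.notMem_erase i A) ((Finset.mem_powersetCard.1 hs).1 hmem)
    rw [Finset.prod_insert hsi]
  have rhs_eq : (k + 1 : ℝ) * es A (k + 1) x
      = ∑ p ∈ (A.powersetCard (k + 1)).sigma (fun t => t), ∏ j ∈ p.1, x j := by
    rw [Finset.sum_sigma, es, Finset.mul_sum]
    apply Finset.sum_congr rfl
    intro t ht
    have hrfl : ∑ s ∈ t, ∏ j ∈ (⟨t, s⟩ : Σ _ : Finset (Fin n), Fin n).fst, x j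
        = ∑ _s ∈ t, ∏ j ∈ t, x j := rfl
    rw [hrfl, Finset.sum_const, (Finset.mem_powersetCard.1 ht).2, nsmul_eq_mul]
    push_cast
    ring
  rw [lhs_eq, rhs_eq]
  apply Finset.sum_nbij' (i := fun p => (⟨insert p.1 p.2, p.1⟩ : Σ _ : Finset (Fin n), Fin n))
    (j := fun p => (⟨p.2, p.1.erase p.2⟩ : Σ _ : Fin n, Finset (Fin n)))
  · intro p hp
    rw [Finset.mem_sigma] at hp ⊢
    obtain ⟨hp1, hp2⟩ := hp
    rw [Finset.mem_powersetCard] at hp2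
    constructor
    · rw [Finset.mem_powersetCard]
      constructor
      · exact Finset.insert_subset hp1 (hp2.1.trans (Finset.erase_subset _ _))
      · rw [Finset.card_insert_of_notMem
          (fun hmem => (Finset.notMem_erase p.1 A) (hp2.1 hmem)), hp2.2]
    · exact Finset.mem_insert_self _ _
  · intro p hp
    rw [Finset.mem_sigma] at hp ⊢
    obtain ⟨hp1, hp2⟩ := hp
    rw [Finset.mem_powersetCard] at hp1
    constructor
    · exact hp1.1 hp2
    · rw [Finset.mem_powersetCard]
      constructor
      · exact fun a ha => Finset.mem_erase.2
          ⟨(Finset.mem_erase.1 ha).1, hp1.1 (Finset.mem_of_mem_erase ha)⟩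
      · rw [Finset.card_erase_of_mem hp2, hp1.2]
        rfl
  · intro p hp
    rw [Finset.mem_sigma] at hp
    obtain ⟨hp1, hp2⟩ := hp
    rw [Finset.mem_powersetCard] at hp2
    have hpi : p.1 ∉ p.2 := fun hmem => (Finset.notMem_erase p.1 A) (hp2.1 hmem)
    simp [Finset.erase_insert hpi]
  · intro p hp
    rw [Finset.mem_sigma] at hp
    obtain ⟨hp1, hp2⟩ := hp
    simp [Finset.insert_erase hp2]
  · intro p hp
    rfl


lemma pa_shift (A : Finset (Fin n)) (x : Fin n → ℝ) (s : ℝ) :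
    pa A (fun i => x i + s) = taylor s (pa A x) := by
  rw [taylor_apply, pa, pa, Polynomial.prod_comp]
  apply Finset.prod_congr rfl
  intro i _
  rw [add_comp, X_comp, C_comp, add_assoc, ← C_add, add_comm s (x i)]

lemma es_shift_pos {A : Finset (Fin n)} {k : ℕ} {x : Fin n → ℝ} (hx : x ∈ GC A k) {j : ℕ}
    (h1 : 1 ≤ j) (hjk : j ≤ k) {s : ℝ} (hs : 0 ≤ s) :
    0 < es A j (fun i => x i + s) := by
  have hkN : k ≤ A.card := card_ge (h1.trans hjk) hx
  have hjN : j ≤ A.card := hjk.trans hkN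
  have key : es A j (fun i => x i + s)
      = ∑ m ∈ Finset.range (j + 1),
          ((m + (A.card - j)).choose (A.card - j) : ℝ) * es A (j - m) x * s ^ m := by
    rw [← pa_coeff (fun i => x i + s) hjN, pa_shift, taylor_coeff,
      eval_eq_sum_range' (lt_of_le_of_lt (le_trans (natDegree_hasseDeriv_le _ _)
        (by rw [pa_natDegree]; omega : (pa A x).natDegree - (A.card - j) ≤ j)) (Nat.lt_succ_self j))]
    apply Finset.sum_congr rfl
    intro m hm
    rw [Finset.mem_range] at hm
    rw [hasseDeriv_coeff, show m + (A.card - j) = A.card - (j - m) by omega,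
      pa_coeff x (by omega : j - m ≤ A.card)]
  rw [key]
  have hterm0 : (0:ℝ) < ((0 + (A.card - j)).choose (A.card - j) : ℝ) * es A (j - 0) x * s ^ 0 := by
    rw [zero_add, Nat.choose_self]
    simpa using es_pos hx hjk
  refine lt_of_lt_of_le hterm0 (Finset.single_le_sum (f := fun m =>
    ((m + (A.card - j)).choose (A.card - j) : ℝ) * es A (j - m) x * s ^ m) ?_ ?_)
  · intro m hm
    have h1 : (0:ℝ) ≤ ((m + (A.card - j)).choose (A.card - j) : ℝ) := by positivity
    have h2 : (0:ℝ) ≤ es A (j - m) x := (es_pos hx (by omega : j - m ≤ k)).le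
    have h3 : (0:ℝ) ≤ s ^ m := by positivity
    positivity
  · exact Finset.mem_range.2 (by omega)

lemma seg_mem {A : Finset (Fin n)} {k : ℕ} {x : Fin n → ℝ} (hk : 1 ≤ k) (hx : x ∈ GC A k)
    {t : ℝ} (h0 : 0 ≤ t) (h1 : t ≤ 1) :
    (fun i => (1 - t) * x i + t) ∈ GC A k := by
  rcases eq_or_lt_of_le h1 with rfl | hlt
  · intro j hj1 hjk
    have : (fun i => (1 - 1) * x i + 1) = (fun _ : Fin n => (1:ℝ)) := by funext i; ring
    rw [this, es_ones]
    have : j ≤ A.card := hjk.trans (card_ge hk hx)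
    exact_mod_cast Nat.choose_pos this
  · intro j hj1 hjk
    have hy : (fun i => (1 - t) * x i) ∈ GC A k := by
      intro m hm1 hmk
      rw [es_mul]
      have : (0:ℝ) < 1 - t := by linarith
      exact mul_pos (by positivity) (hx m hm1 hmk)
    exact es_shift_pos hy hj1 hjk h0

lemma es_seg_continuous (A : Finset (Fin n)) (j : ℕ) (x : Fin n → ℝ) :
    Continuous fun t : ℝ => es A j (fun i => (1 - t) * x i + t) := by
  unfold es
  apply continuous_finset_sum
  intro s _
  apply continuous_finset_prod
  intro i _
  fun_prop

lemma del_mem : ∀ k : ℕ, 1 ≤ k → ∀ (A : Finset (Fin n)) (x : Fin n → ℝ) (i : Fin n),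
    i ∈ A → x ∈ GC A k → x ∈ GC (A.erase i) (k - 1) := by
  intro k
  induction k using Nat.strong_induction_on with
  | _ k IH =>
    intro hk1 A x i hiA hx
    rcases eq_or_lt_of_le hk1 with h1 | hk2
    · intro j hj1 hj0
      omega
    -- now 2 ≤ k
    have hk2' : 2 ≤ k := hk2
    intro j hj1 hjk1
    rcases Nat.lt_or_ge j (k - 1) with hjlt | hjge
    · -- use IH at k - 1
      have hxk1 : x ∈ GC A (k - 1) := GC_mono (by omega) hx
      exact IH (k - 1) (by omega) (by omega) A x i hiA hxk1 j hj1 (by omega)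
    have hj : j = k - 1 := by omega
    subst hj
    -- IVT argument
    set φ : ℝ → ℝ := fun t => es (A.erase i) (k - 1) (fun m => (1 - t) * x m + t) with hφ
    have hnz : ∀ t ∈ Set.Icc (0:ℝ) 1, φ t ≠ 0 := by
      intro t ht h0
      set z : Fin n → ℝ := fun m => (1 - t) * x m + t with hz
      have hzmem : z ∈ GC A k := seg_mem hk1 hx ht.1 ht.2
      have hz2 : 0 < es (A.erase i) (k - 2) z := by
        have hzk1 : z ∈ GC A (k - 1) := GC_mono (by omega) hzmem
        have := IH (k - 1) (by omega) (by omega) A z i hiA hzk1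
        exact es_pos this (by omega : k - 2 ≤ k - 1 - 1)
      have hnw := newton_weak (A.erase i) z (by omega : 2 ≤ k) h0
      have hesk : es (A.erase i) k z ≤ 0 := by nlinarith
      have hAk : es A k z = es (A.erase i) k z + z i * es (A.erase i) (k - 1) z := by
        have := es_erase hiA (k - 1) z
        rw [show k - 1 + 1 = k by omega] at this
        exact this
      have h0' : es (A.erase i) (k - 1) z = 0 := h0
      have hpos : 0 < es A k z := hzmem k hk1 le_rfl
      rw [hAk, h0', mul_zero, add_zero] at hpos
      linarith
    have hcont : Continuous φ := es_seg_continuous (A.erase i) (k - 1) x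
    have hφ1 : 0 < φ 1 := by
      have heq : (fun m => (1 - (1:ℝ)) * x m + 1) = (fun _ : Fin n => (1:ℝ)) := by
        funext m; ring
      rw [hφ]
      simp only [heq]
      rw [es_ones]
      have hkA : k ≤ A.card := card_ge hk1 hx
      have : k - 1 ≤ (A.erase i).card := by
        rw [Finset.card_erase_of_mem hiA]; omega
      exact_mod_cast Nat.choose_pos this
    have hφ0 : 0 < φ 0 := by
      by_contra hc
      push_neg at hc
      have hne := hnz 0 (Set.mem_Icc.2 ⟨le_refl 0, zero_le_one⟩)
      have hlt : φ 0 < 0 := lt_of_le_of_ne hc hne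
      have := intermediate_value_Icc (zero_le_one) hcont.continuousOn
      have h0mem : (0:ℝ) ∈ Set.Icc (φ 0) (φ 1) := Set.mem_Icc.2 ⟨hlt.le, hφ1.le⟩
      obtain ⟨t, ht, hφt⟩ := this h0mem
      exact hnz t ht hφt
    have heq0 : (fun m => (1 - (0:ℝ)) * x m + 0) = x := by funext m; ring
    rw [hφ] at hφ0
    simp only [heq0] at hφ0
    exact hφ0

lemma bergstrom_quot {a b p0 p1 q0 q1 r0 r1 : ℝ} (hp0 : 0 < p0) (hp1 : 0 < p1)
    (hq0 : 0 < q0) (hq1 : 0 < q1) (hr0 : 0 < r0) (hr1 : 0 < r1)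
    (hP : 0 < p1 + a * p0) (hQ : 0 < q1 + b * q0) (hR : 0 < r1 + (a + b) * r0)
    (hsup : p1 / p0 + q1 / q0 ≤ r1 / r0) :
    (a + b) ^ 2 * r0 / (r1 + (a + b) * r0)
      ≤ a ^ 2 * p0 / (p1 + a * p0) + b ^ 2 * q0 / (q1 + b * q0) := by
  have hu' : p1 / p0 + a = (p1 + a * p0) / p0 := by field_simp
  have hv' : q1 / q0 + b = (q1 + b * q0) / q0 := by field_simp
  have hw' : r1 / r0 + (a + b) = (r1 + (a + b) * r0) / r0 := by field_simp
  have hu : 0 < p1 / p0 + a := by rw [hu']; positivity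
  have hv : 0 < q1 / q0 + b := by rw [hv']; positivity
  have hw : 0 < r1 / r0 + (a + b) := by rw [hw']; positivity
  have e1 : a ^ 2 * p0 / (p1 + a * p0) = a ^ 2 / (p1 / p0 + a) := by
    rw [hu', div_div_eq_mul_div]
  have e2 : b ^ 2 * q0 / (q1 + b * q0) = b ^ 2 / (q1 / q0 + b) := by
    rw [hv', div_div_eq_mul_div]
  have e3 : (a + b) ^ 2 * r0 / (r1 + (a + b) * r0) = (a + b) ^ 2 / (r1 / r0 + (a + b)) := by
    rw [hw', div_div_eq_mul_div]
  rw [e1, e2, e3]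
  have step1 : (a + b) ^ 2 / (r1 / r0 + (a + b))
      ≤ (a + b) ^ 2 / ((p1 / p0 + a) + (q1 / q0 + b)) := by
    apply div_le_div_of_nonneg_left (sq_nonneg _) (by linarith) (by linarith)
  refine step1.trans ?_
  rw [div_add_div _ _ (ne_of_gt hu) (ne_of_gt hv),
    div_le_div_iff₀ (by positivity) (by positivity)]
  nlinarith [sq_nonneg (a * (q1 / q0 + b) - b * (p1 / p0 + a)), mul_pos hu hv]

lemma es_one_add (A : Finset (Fin n)) (x y : Fin n → ℝ) :
    es A 1 (x + y) = es A 1 x + es A 1 y := by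
  simp [es_one, Finset.sum_add_distrib]

lemma main_ind : ∀ k : ℕ, 1 ≤ k → ∀ (A : Finset (Fin n)) (x y : Fin n → ℝ),
    x ∈ GC A k → y ∈ GC A k →
    (x + y) ∈ GC A k ∧
      es A k x / es A (k - 1) x + es A k y / es A (k - 1) y
        ≤ es A k (x + y) / es A (k - 1) (x + y) := by
  intro k
  induction k using Nat.strong_induction_on with
  | _ k IH =>
    intro hk1 A x y hx hy
    rcases Nat.lt_or_ge k 2 with hk | hk
    · -- base case k = 1
      have hk' : k = 1 := by omega
      subst hk'
      have hadd : es A 1 (x + y) = es A 1 x + es A 1 y := es_one_add A x y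
      constructor
      · intro j hj1 hjk
        have hj : j = 1 := by omega
        subst hj
        rw [hadd]
        exact add_pos (hx 1 le_rfl le_rfl) (hy 1 le_rfl le_rfl)
      · simp only [Nat.sub_self, es_zero, div_one]
        rw [hadd]
    · -- inductive step, k = m + 2
      obtain ⟨m, rfl⟩ : ∃ m, k = m + 2 := ⟨k - 2, by omega⟩
      have hsub : m + 2 - 1 = m + 1 := rfl
      rw [hsub]
      set z := x + y with hzdef
      have hxm1 : x ∈ GC A (m + 1) := GC_mono (by omega) hx
      have hym1 : y ∈ GC A (m + 1) := GC_mono (by omega) hy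
      obtain ⟨hz1, _⟩ := IH (m + 1) (by omega) (by omega) A x y hxm1 hym1
      -- hz1 : z ∈ GC A (m+1)
      have hPx : 0 < es A (m + 1) x := es_pos hxm1 le_rfl
      have hPy : 0 < es A (m + 1) y := es_pos hym1 le_rfl
      have hPz : 0 < es A (m + 1) z := es_pos hz1 le_rfl
      -- identity : es A 1 w * es A (m+1) w = (m+2) * es A (m+2) w + Σ_i (w i)^2 es(erase i) m w
      have idw : ∀ w : Fin n → ℝ, es A 1 w * es A (m + 1) w
          = ((m : ℝ) + 2) * es A (m + 2) w + ∑ i ∈ A, (w i) ^ 2 * es (A.erase i) m w := by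
        intro w
        rw [es_one, Finset.sum_mul]
        have hterm : ∀ i ∈ A, w i * es A (m + 1) w
            = w i * es (A.erase i) (m + 1) w + (w i) ^ 2 * es (A.erase i) m w := by
          intro i hi
          rw [es_erase hi m w]
          ring
        rw [Finset.sum_congr rfl hterm, Finset.sum_add_distrib, sum_es_erase]
        push_cast
        ring
      -- superadditivity of the per-index sums
      have termwise : ∀ i ∈ A,
          (z i) ^ 2 * es (A.erase i) m z / es A (m + 1) z
            ≤ (x i) ^ 2 * es (A.erase i) m x / es A (m + 1) x
              + (y i) ^ 2 * es (A.erase i) m y / es A (m + 1) y := by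
        intro i hi
        have hdx : x ∈ GC (A.erase i) (m + 1) := by
          have := del_mem (m + 2) (by omega) A x i hi hx
          rwa [hsub] at this
        have hdy : y ∈ GC (A.erase i) (m + 1) := by
          have := del_mem (m + 2) (by omega) A y i hi hy
          rwa [hsub] at this
        obtain ⟨hdz, hq⟩ := IH (m + 1) (by omega) (by omega) (A.erase i) x y hdx hdy
        rw [show m + 1 - 1 = m from rfl] at hq
        have p0 : 0 < es (A.erase i) m x := es_pos hdx (by omega)
        have p1 : 0 < es (A.erase i) (m + 1) x := es_pos hdx le_rfl
        have q0 : 0 < es (A.erase i) m y := es_pos hdy (by omega)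
        have q1 : 0 < es (A.erase i) (m + 1) y := es_pos hdy le_rfl
        have r0 : 0 < es (A.erase i) m z := es_pos hdz (by omega)
        have r1 : 0 < es (A.erase i) (m + 1) z := es_pos hdz le_rfl
        have hex : es A (m + 1) x = es (A.erase i) (m + 1) x + x i * es (A.erase i) m x :=
          es_erase hi m x
        have hey : es A (m + 1) y = es (A.erase i) (m + 1) y + y i * es (A.erase i) m y :=
          es_erase hi m y
        have hez : es A (m + 1) z = es (A.erase i) (m + 1) z + (x i + y i) * es (A.erase i) m z := by
          have := es_erase hi m z
          rwa [show z i = x i + y i from rfl] at this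
        have hzi : z i = x i + y i := rfl
        rw [hex, hey, hez, hzi]
        exact bergstrom_quot p0 p1 q0 q1 r0 r1 (hex ▸ hPx) (hey ▸ hPy) (hez ▸ hPz) hq
      have hsum : ∑ i ∈ A, (z i) ^ 2 * es (A.erase i) m z / es A (m + 1) z
          ≤ ∑ i ∈ A, (x i) ^ 2 * es (A.erase i) m x / es A (m + 1) x
            + ∑ i ∈ A, (y i) ^ 2 * es (A.erase i) m y / es A (m + 1) y := by
        rw [← Finset.sum_add_distrib]
        exact Finset.sum_le_sum termwise
      -- divide the identity by es A (m+1) w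
      have hid : ∀ w : Fin n → ℝ, 0 < es A (m + 1) w →
          ((m : ℝ) + 2) * (es A (m + 2) w / es A (m + 1) w)
            = es A 1 w - ∑ i ∈ A, (w i) ^ 2 * es (A.erase i) m w / es A (m + 1) w := by
        intro w hw
        have hne : es A (m + 1) w ≠ 0 := ne_of_gt hw
        rw [← mul_div_assoc, eq_sub_iff_add_eq, ← Finset.sum_div, ← add_div,
          div_eq_iff hne, idw w]
      have hidx := hid x hPx
      have hidy := hid y hPy
      have hidz := hid z hPz
      have hes1 : es A 1 z = es A 1 x + es A 1 y := es_one_add A x y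
      have hfinal : ((m : ℝ) + 2) * (es A (m + 2) x / es A (m + 1) x)
          + ((m : ℝ) + 2) * (es A (m + 2) y / es A (m + 1) y)
          ≤ ((m : ℝ) + 2) * (es A (m + 2) z / es A (m + 1) z) := by
        rw [hidx, hidy, hidz, hes1]
        linarith
      have hm2 : (0 : ℝ) < (m : ℝ) + 2 := by positivity
      have hqineq : es A (m + 2) x / es A (m + 1) x + es A (m + 2) y / es A (m + 1) y
          ≤ es A (m + 2) z / es A (m + 1) z := by
        rw [← mul_add] at hfinal
        exact (mul_le_mul_iff_right₀ hm2).1 hfinal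
      refine ⟨?_, hqineq⟩
      intro j hj1 hjk
      rcases Nat.lt_or_ge j (m + 2) with hjlt | hjge
      · exact hz1 j hj1 (by omega)
      have hj : j = m + 2 := by omega
      subst hj
      have hqx : 0 < es A (m + 2) x / es A (m + 1) x :=
        div_pos (es_pos hx le_rfl) hPx
      have hqy : 0 < es A (m + 2) y / es A (m + 1) y :=
        div_pos (es_pos hy le_rfl) hPy
      have hqz : 0 < es A (m + 2) z / es A (m + 1) z :=
        lt_of_lt_of_le (add_pos hqx hqy) hqineq
      have : es A (m + 2) z = (es A (m + 2) z / es A (m + 1) z) * es A (m + 1) z :=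
        (div_mul_cancel₀ _ (ne_of_gt hPz)).symm
      rw [this]
      exact mul_pos hqz hPz


lemma telescope (A : Finset (Fin n)) (x : Fin n → ℝ) (l : ℕ) :
    ∀ k, l ≤ k → (∀ j, j ≤ k → es A j x ≠ 0) →
    ∏ j ∈ Finset.Ioc l k, (es A j x / es A (j - 1) x) = es A k x / es A l x := by
  intro k
  induction k with
  | zero =>
    intro hl h
    interval_cases l
    rw [Finset.Ioc_self, Finset.prod_empty]
    exact (div_self (h 0 le_rfl)).symm
  | succ k ih =>
    intro hl h
    rcases Nat.lt_or_ge l (k + 1) with hlt | hge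
    · have hlk : l ≤ k := by omega
      have h0 : es A k x ≠ 0 := h k (by omega)
      have h1 : es A l x ≠ 0 := h l (by omega)
      rw [Finset.prod_Ioc_succ_top hlk, ih hlk (fun j hj => h j (by omega)),
        show k + 1 - 1 = k from rfl]
      field_simp
    · have hl1 : l = k + 1 := by omega
      subst hl1
      rw [Finset.Ioc_self, Finset.prod_empty]
      exact (div_self (h (k + 1) le_rfl)).symm

lemma gm_superadd (s : Finset ℕ) (hs : s.Nonempty) (u v : ℕ → ℝ)
    (hu : ∀ i ∈ s, 0 < u i) (hv : ∀ i ∈ s, 0 < v i) :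
    (∏ i ∈ s, u i) ^ ((1 : ℝ) / s.card) + (∏ i ∈ s, v i) ^ ((1 : ℝ) / s.card)
      ≤ (∏ i ∈ s, (u i + v i)) ^ ((1 : ℝ) / s.card) := by
  have hm : (0 : ℝ) < (s.card : ℝ) := by exact_mod_cast Finset.card_pos.2 hs
  set r : ℝ := (1 : ℝ) / s.card with hr
  have hw : ∑ _i ∈ s, r = 1 := by
    rw [Finset.sum_const, nsmul_eq_mul, hr]
    field_simp
  have hwnonneg : ∀ i ∈ s, (0:ℝ) ≤ r := fun i _ => by positivity
  have huv : ∀ i ∈ s, 0 < u i + v i := fun i hi => add_pos (hu i hi) (hv i hi)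
  have h1 := Real.geom_mean_le_arith_mean_weighted s (fun _ => r)
    (fun i => u i / (u i + v i)) hwnonneg hw
    (fun i hi => (div_pos (hu i hi) (huv i hi)).le)
  have h2 := Real.geom_mean_le_arith_mean_weighted s (fun _ => r)
    (fun i => v i / (u i + v i)) hwnonneg hw
    (fun i hi => (div_pos (hv i hi) (huv i hi)).le)
  have e : ∀ (f : ℕ → ℝ), (∀ i ∈ s, 0 < f i) →
      ∏ i ∈ s, (f i / (u i + v i)) ^ r
        = (∏ i ∈ s, f i) ^ r / (∏ i ∈ s, (u i + v i)) ^ r := by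
    intro f hf
    rw [Real.finset_prod_rpow s _ (fun i hi => div_nonneg (hf i hi).le (huv i hi).le) r,
      Finset.prod_div_distrib,
      Real.div_rpow (Finset.prod_nonneg fun i hi => (hf i hi).le)
        (Finset.prod_nonneg fun i hi => (huv i hi).le)]
  rw [e u hu] at h1
  rw [e v hv] at h2
  have hsum : ∑ i ∈ s, r * (u i / (u i + v i)) + ∑ i ∈ s, r * (v i / (u i + v i)) = 1 := by
    rw [← Finset.sum_add_distrib, ← hw]
    apply Finset.sum_congr rfl
    intro i hi
    have := huv i hi
    field_simp
  have hD : (0 : ℝ) < (∏ i ∈ s, (u i + v i)) ^ r :=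
    Real.rpow_pos_of_pos (Finset.prod_pos huv) r
  have hcomb : (∏ i ∈ s, u i) ^ r / (∏ i ∈ s, (u i + v i)) ^ r
      + (∏ i ∈ s, v i) ^ r / (∏ i ∈ s, (u i + v i)) ^ r ≤ 1 := by
    calc _ ≤ ∑ i ∈ s, r * (u i / (u i + v i)) + ∑ i ∈ s, r * (v i / (u i + v i)) :=
            add_le_add h1 h2
      _ = 1 := hsum
  rw [← add_div, div_le_one hD] at hcomb
  exact hcomb

lemma smul_mem_GC {A : Finset (Fin n)} {k : ℕ} {x : Fin n → ℝ} (hx : x ∈ GC A k) {a : ℝ}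
    (ha : 0 < a) : a • x ∈ GC A k := by
  intro j hj1 hjk
  have : a • x = fun i => a * x i := rfl
  rw [this, es_mul]
  exact mul_pos (by positivity) (hx j hj1 hjk)

end HQC

open HQC in
theorem hessian_quotient_concave' (n k l : ℕ) (hlk : l < k) (hkn : k ≤ n) :
    ConcaveOn ℝ (GC (Finset.univ : Finset (Fin n)) k)
      (fun x : Fin n → ℝ =>
        (es Finset.univ k x / es Finset.univ l x) ^ ((1 : ℝ) / ((k : ℝ) - (l : ℝ)))) := by
  have hk1 : 1 ≤ k := by omega
  set U : Finset (Fin n) := Finset.univ with hU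
  -- convexity
  have hconv : Convex ℝ (GC U k) := by
    rw [convex_iff_forall_pos]
    intro x hx y hy a b ha hb hab
    exact (main_ind k hk1 U (a • x) (b • y) (smul_mem_GC hx ha) (smul_mem_GC hy hb)).1
  -- exponent bookkeeping
  have hcast : (k : ℝ) - (l : ℝ) = ((k - l : ℕ) : ℝ) := by
    push_cast [Nat.cast_sub hlk.le]
    ring
  have hcard : (Finset.Ioc l k).card = k - l := Nat.card_Ioc l k
  have hne : (Finset.Ioc l k).Nonempty := by
    rw [Finset.nonempty_Ioc]; exact hlk
  -- value of F on cone members via telescoping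
  have hF : ∀ w ∈ GC U k,
      (es U k w / es U l w) ^ ((1 : ℝ) / ((k : ℝ) - (l : ℝ)))
        = (∏ j ∈ Finset.Ioc l k, (es U j w / es U (j - 1) w))
            ^ ((1 : ℝ) / (Finset.Ioc l k).card) := by
    intro w hw
    rw [telescope U w l k hlk.le (fun j hj => (es_pos hw hj).ne'), hcast, hcard]
  constructor
  · exact hconv
  intro x hx y hy a b ha hb hab
  rcases eq_or_lt_of_le ha with rfl | ha'
  · have hb1 : b = 1 := by linarith
    subst hb1
    simp
  rcases eq_or_lt_of_le hb with rfl | hb'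
  · have ha1 : a = 1 := by linarith
    subst ha1
    simp
  -- both positive
  have hax : a • x ∈ GC U k := smul_mem_GC hx ha'
  have hby : b • y ∈ GC U k := smul_mem_GC hy hb'
  have hz : a • x + b • y ∈ GC U k := (main_ind k hk1 U _ _ hax hby).1
  -- superadditivity per factor
  have hsup : ∀ j ∈ Finset.Ioc l k,
      es U j (a • x) / es U (j - 1) (a • x) + es U j (b • y) / es U (j - 1) (b • y)
        ≤ es U j (a • x + b • y) / es U (j - 1) (a • x + b • y) := by
    intro j hj
    rw [Finset.mem_Ioc] at hj
    exact (main_ind j (by omega) U (a • x) (b • y)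
      (GC_mono hj.2 hax) (GC_mono hj.2 hby)).2
  have hqpos : ∀ (w : Fin n → ℝ), w ∈ GC U k → ∀ j ∈ Finset.Ioc l k,
      0 < es U j w / es U (j - 1) w := by
    intro w hw j hj
    rw [Finset.mem_Ioc] at hj
    exact div_pos (es_pos hw hj.2) (es_pos hw (by omega))
  -- chain of inequalities
  have step1 : (∏ j ∈ Finset.Ioc l k, (es U j (a • x) / es U (j - 1) (a • x)))
        ^ ((1 : ℝ) / (Finset.Ioc l k).card)
      + (∏ j ∈ Finset.Ioc l k, (es U j (b • y) / es U (j - 1) (b • y)))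
        ^ ((1 : ℝ) / (Finset.Ioc l k).card)
      ≤ (∏ j ∈ Finset.Ioc l k, (es U j (a • x + b • y) / es U (j - 1) (a • x + b • y)))
        ^ ((1 : ℝ) / (Finset.Ioc l k).card) := by
    refine le_trans (gm_superadd _ hne _ _ (hqpos _ hax) (hqpos _ hby)) ?_
    apply Real.rpow_le_rpow
    · exact Finset.prod_nonneg fun j hj =>
        (add_pos (hqpos _ hax j hj) (hqpos _ hby j hj)).le
    · exact Finset.prod_le_prod
        (fun j hj => (add_pos (hqpos _ hax j hj) (hqpos _ hby j hj)).le)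
        hsup
    · positivity
  -- homogeneity : F (c • w) = c * F w
  have hhom : ∀ (c : ℝ), 0 < c → ∀ w ∈ GC U k,
      (es U k (c • w) / es U l (c • w)) ^ ((1 : ℝ) / ((k : ℝ) - (l : ℝ)))
        = c * (es U k w / es U l w) ^ ((1 : ℝ) / ((k : ℝ) - (l : ℝ))) := by
    intro c hc w hw
    have hcw : c • w = fun i => c * w i := rfl
    have hlpos : 0 < es U l w := es_pos hw (by omega)
    have hkpos : 0 < es U k w := es_pos hw le_rfl
    have hratio : es U k (c • w) / es U l (c • w)
        = c ^ (k - l : ℕ) * (es U k w / es U l w) := by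
      rw [hcw, es_mul, es_mul]
      rw [show k = (k - l) + l by omega, pow_add]
      field_simp
      rw [Nat.add_sub_cancel]
      ring
    rw [hratio, hcast, Real.mul_rpow (by positivity) (by positivity),
      ← Real.rpow_natCast c (k - l), ← Real.rpow_mul hc.le]
    have hcl : ((k - l : ℕ) : ℝ) ≠ 0 := by
      have : 0 < k - l := by omega
      positivity
    rw [mul_one_div_cancel hcl, Real.rpow_one]
  -- final computation
  have hgoal := step1
  rw [← hF _ hax, ← hF _ hby, ← hF _ hz] at hgoal
  rw [hhom a ha' x hx, hhom b hb' y hy] at hgoal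
  simpa [smul_eq_mul] using hgoal

/-- For 0 ≤ l < k ≤ n, the function λ ↦ [σ_k(λ)/σ_l(λ)]^{1/(k-l)} is concave on Γ_k. -/
theorem hessian_quotient_concave (n k l : ℕ) (hlk : l < k) (hkn : k ≤ n) :
    ConcaveOn ℝ (gardingCone n k)
      (fun x : Fin n → ℝ =>
        (esymm n k x / esymm n l x) ^ ((1 : ℝ) / ((k : ℝ) - (l : ℝ)))) := by
  have h := hessian_quotient_concave' n k l hlk hkn
  have hset : gardingCone n k = HQC.GC (Finset.univ : Finset (Fin n)) k := rfl
  have hfun : (fun x : Fin n → ℝ =>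
      (esymm n k x / esymm n l x) ^ ((1 : ℝ) / ((k : ℝ) - (l : ℝ))))
      = (fun x : Fin n → ℝ =>
        (HQC.es Finset.univ k x / HQC.es Finset.univ l x) ^ ((1 : ℝ) / ((k : ℝ) - (l : ℝ)))) := rfl
  rw [hset, hfun]
  exact h
end

section
/- For λ ∈ Γ_k and 0 ≤ l < k ≤ n, the function λ ↦ [σ_k(λ)/σ_l(λ)]^{1/(k-l)} is monotone (elliptic) on Γ_k: each partial derivative ∂/∂λ_i of this function is strictly positive, i.e. σ_{k-1}(λ|i)σ_l(λ) - σ_k(λ)σ_{l-1}(λ|i) > 0 for each i. -/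
open Finset Polynomial

/-- Elementary symmetric sum over an arbitrary index finset. -/
noncomputable def eS {ι : Type*} (A : Finset ι) (k : ℕ) (x : ι → ℝ) : ℝ :=
  ∑ s ∈ A.powersetCard k, ∏ i ∈ s, x i

lemma eS_zero {ι : Type*} (A : Finset ι) (x : ι → ℝ) : eS A 0 x = 1 := by
  simp [eS]

lemma eS_of_card_lt {ι : Type*} {A : Finset ι} {k : ℕ} (h : A.card < k) (x : ι → ℝ) :
    eS A k x = 0 := by
  simp [eS, Finset.powersetCard_eq_empty.2 h]

lemma eS_pos {ι : Type*} {A : Finset ι} {k : ℕ} (h : k ≤ A.card) {x : ι → ℝ}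
    (hx : ∀ i ∈ A, 0 < x i) : 0 < eS A k x := by
  apply Finset.sum_pos
  · intro s hs
    rw [Finset.mem_powersetCard] at hs
    exact Finset.prod_pos fun i hi => hx i (hs.1 hi)
  · exact Finset.powersetCard_nonempty.2 h

lemma eS_insert {ι : Type*} [DecidableEq ι] {A : Finset ι} {a : ι} (ha : a ∉ A) (k : ℕ)
    (x : ι → ℝ) :
    eS (insert a A) (k+1) x = eS A (k+1) x + x a * eS A k x := by
  unfold eS
  rw [Finset.powersetCard_succ_insert ha, Finset.sum_union, Finset.sum_image]
  · rw [Finset.mul_sum]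
    congr 1
    refine Finset.sum_congr rfl fun u hu => ?_
    rw [Finset.mem_powersetCard] at hu
    rw [Finset.prod_insert (fun h => ha (hu.1 h))]
  · intro u hu v hv huv
    rw [Finset.mem_coe, Finset.mem_powersetCard] at hu hv
    have : ∀ w : Finset ι, w ⊆ A → (insert a w).erase a = w := fun w hw => by
      rw [Finset.erase_insert (fun h => ha (hw h))]
    rw [← this u hu.1, ← this v hv.1, huv]
  · rw [Finset.disjoint_right]
    intro s hs hs'
    rw [Finset.mem_image] at hs
    obtain ⟨u, hu, rfl⟩ := hs
    rw [Finset.mem_powersetCard] at hs'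
    exact ha (hs'.1 (Finset.mem_insert_self a u))

lemma eS_erase {ι : Type*} [DecidableEq ι] {A : Finset ι} {i : ι} (hi : i ∈ A) (k : ℕ)
    (x : ι → ℝ) :
    eS A (k+1) x = eS (A.erase i) (k+1) x + x i * eS (A.erase i) k x := by
  conv_lhs => rw [← Finset.insert_erase hi]
  exact eS_insert (Finset.notMem_erase i A) k x


-- counting lemma
lemma count_supersets {ι : Type*} [DecidableEq ι] {A u : Finset ι} (hu : u ⊆ A) {j : ℕ}
    (hj : u.card ≤ j) :
    ((A.powersetCard j).filter (fun s => u ⊆ s)).card = (A.card - u.card).choose (j - u.card) := by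
  rw [← Finset.card_sdiff_of_subset hu, ← Finset.card_powersetCard]
  apply Finset.card_bij' (fun s _ => s \ u) (fun w _ => w ∪ u)
  · intro s hs
    rw [Finset.mem_filter, Finset.mem_powersetCard] at hs
    rw [Finset.mem_powersetCard]
    refine ⟨Finset.sdiff_subset_sdiff hs.1.1 le_rfl, ?_⟩
    rw [Finset.card_sdiff_of_subset hs.2, hs.1.2]
  · intro w hw
    rw [Finset.mem_powersetCard] at hw
    rw [Finset.mem_filter, Finset.mem_powersetCard]
    have hdisj : Disjoint w u := Finset.disjoint_of_subset_left hw.1 (Finset.sdiff_disjoint)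
    constructor
    · constructor
      · exact Finset.union_subset (hw.1.trans Finset.sdiff_subset) hu
      · rw [Finset.card_union_of_disjoint hdisj, hw.2]
        omega
    · exact Finset.subset_union_right
  · intro s hs
    rw [Finset.mem_filter] at hs
    rw [Finset.sdiff_union_of_subset hs.2]
  · intro w hw
    rw [Finset.mem_powersetCard] at hw
    have hdisj : Disjoint w u := Finset.disjoint_of_subset_left hw.1 (Finset.sdiff_disjoint)
    rw [Finset.union_sdiff_cancel_right hdisj]

lemma eS_shift {ι : Type*} [DecidableEq ι] (A : Finset ι) (j : ℕ) (x : ι → ℝ) (c : ℝ) :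
    eS A j (fun i => x i + c) =
      ∑ m ∈ Finset.range (j+1), ((A.card - m).choose (j-m) : ℝ) * eS A m x * c^(j-m) := by
  unfold eS
  have h1 : ∀ s ∈ A.powersetCard j, (∏ i ∈ s, (x i + c))
      = ∑ u ∈ s.powerset, (∏ i ∈ u, x i) * c^(j - u.card) := by
    intro s hs
    rw [Finset.mem_powersetCard] at hs
    rw [Finset.prod_add]
    refine Finset.sum_congr rfl fun u hu => ?_
    rw [Finset.mem_powerset] at hu
    rw [Finset.prod_const, Finset.card_sdiff_of_subset hu, hs.2]
  rw [Finset.sum_congr rfl h1]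
  rw [Finset.sum_comm' (t' := A.powerset)
      (s' := fun u => (A.powersetCard j).filter (fun s => u ⊆ s)) ?_]
  swap
  · intro s u
    simp only [Finset.mem_powerset, Finset.mem_filter, Finset.mem_powersetCard]
    constructor
    · rintro ⟨⟨hsA, hsc⟩, hus⟩
      exact ⟨⟨⟨hsA, hsc⟩, hus⟩, hus.trans hsA⟩
    · rintro ⟨⟨⟨hsA, hsc⟩, hus⟩, _⟩
      exact ⟨⟨hsA, hsc⟩, hus⟩
  -- now : ∑ u ∈ A.powerset, ∑ s ∈ filter, (∏ x) * c^(j-#u)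
  rw [Finset.powerset_card_disjiUnion]; erw [Finset.sum_disjiUnion]
  have h2 : ∀ m ∈ Finset.range (A.card + 1),
      (∑ u ∈ A.powersetCard m, ∑ _s ∈ (A.powersetCard j).filter (fun s => u ⊆ s),
        (∏ i ∈ u, x i) * c^(j - u.card))
      = if m ≤ j then ((A.card - m).choose (j-m) : ℝ) * eS A m x * c^(j-m) else 0 := by
    intro m _hm
    by_cases hmj : m ≤ j
    · rw [if_pos hmj]
      rw [eS, Finset.mul_sum, Finset.sum_mul]
      refine Finset.sum_congr rfl fun u hu => ?_
      rw [Finset.mem_powersetCard] at hu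
      rw [Finset.sum_const, count_supersets hu.1 (hu.2 ▸ hmj), hu.2, nsmul_eq_mul]
      ring
    · rw [if_neg hmj]
      refine Finset.sum_eq_zero fun u hu => ?_
      rw [Finset.mem_powersetCard] at hu
      have : (A.powersetCard j).filter (fun s => u ⊆ s) = ∅ := by
        rw [Finset.filter_eq_empty_iff]
        intro s hs
        rw [Finset.mem_powersetCard] at hs
        intro hus
        have := Finset.card_le_card hus
        omega
      rw [this, Finset.sum_empty]
  rw [Finset.sum_congr rfl h2]
  rw [← Finset.sum_filter]
  apply Finset.sum_subset
  · intro m hm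
    rw [Finset.mem_filter, Finset.mem_range] at hm
    rw [Finset.mem_range]
    omega
  · intro m hm hm'
    rw [Finset.mem_range] at hm
    rw [Finset.mem_filter, Finset.mem_range] at hm'
    have h3 : A.card < m := by omega
    rw [eS_of_card_lt h3, mul_zero, zero_mul]

lemma eS_card {ι : Type*} (A : Finset ι) (x : ι → ℝ) : eS A A.card x = ∏ i ∈ A, x i := by
  rw [eS, Finset.powersetCard_self, Finset.sum_singleton]

lemma eS_one {ι : Type*} (A : Finset ι) (x : ι → ℝ) : eS A 1 x = ∑ i ∈ A, x i := by
  rw [eS, Finset.powersetCard_one, Finset.sum_map]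
  simp

lemma eS_compl {ι : Type*} [DecidableEq ι] (A : Finset ι) {x : ι → ℝ}
    (hx : ∀ i ∈ A, x i ≠ 0) {s : ℕ} (hs : s ≤ A.card) :
    eS A (A.card - s) x = (∏ i ∈ A, x i) * eS A s (fun i => (x i)⁻¹) := by
  rw [eS, eS, Finset.mul_sum]
  apply Finset.sum_nbij' (i := fun t => A \ t) (j := fun t => A \ t)
  · intro t ht
    rw [Finset.mem_powersetCard] at ht ⊢
    exact ⟨Finset.sdiff_subset, by rw [Finset.card_sdiff_of_subset ht.1, ht.2]; omega⟩
  · intro t ht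
    rw [Finset.mem_powersetCard] at ht ⊢
    exact ⟨Finset.sdiff_subset, by rw [Finset.card_sdiff_of_subset ht.1, ht.2]⟩
  · intro t ht
    rw [Finset.mem_powersetCard] at ht
    rw [Finset.sdiff_sdiff_eq_self ht.1]
  · intro t ht
    rw [Finset.mem_powersetCard] at ht
    rw [Finset.sdiff_sdiff_eq_self ht.1]
  · intro t ht
    rw [Finset.mem_powersetCard] at ht
    have hne : (∏ i ∈ A \ t, x i) ≠ 0 :=
      Finset.prod_ne_zero_iff.2 fun i hi => hx i (Finset.sdiff_subset hi)
    rw [Finset.prod_inv_distrib, ← Finset.prod_sdiff ht.1 (f := x)]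
    field_simp

lemma eS_two {ι : Type*} [DecidableEq ι] (A : Finset ι) (x : ι → ℝ) :
    2 * eS A 2 x = (∑ i ∈ A, x i)^2 - ∑ i ∈ A, (x i)^2 := by
  induction A using Finset.induction_on with
  | empty => simp [eS_of_card_lt (show (∅ : Finset ι).card < 2 by simp)]
  | insert a B ha ih =>
    have h2 : eS (insert a B) 2 x = eS B 2 x + x a * eS B 1 x := eS_insert ha 1 x
    rw [h2, Finset.sum_insert ha, Finset.sum_insert ha, eS_one]
    nlinarith [ih]

/-- Core "top-coefficient" Newton inequality via Cauchy–Schwarz. -/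
lemma core_newton {q : ℕ} (hq : 2 ≤ q) (y : Fin q → ℝ) (hy : ∀ i, y i ≠ 0) :
    2 * q * (eS univ (q-2) y * eS univ q y) ≤ (q - 1 : ℝ) * (eS univ (q-1) y)^2 := by
  have hcard : (univ : Finset (Fin q)).card = q := by simp
  have h1 : eS univ (q-1) y = (∏ i, y i) * (∑ i, (y i)⁻¹) := by
    have := eS_compl (univ : Finset (Fin q)) (x := y) (fun i _ => hy i) (s := 1) (by omega)
    rw [hcard] at this
    rw [this, eS_one]
  have h2 : 2 * eS univ (q-2) y = (∏ i, y i) * ((∑ i, (y i)⁻¹)^2 - ∑ i, ((y i)⁻¹)^2) := by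
    have := eS_compl (univ : Finset (Fin q)) (x := y) (fun i _ => hy i) (s := 2) (by omega)
    rw [hcard] at this
    rw [this, ← mul_assoc, mul_comm (2:ℝ), mul_assoc, eS_two]
  have h3 : eS univ q y = ∏ i, y i := by
    have := eS_card (univ : Finset (Fin q)) y
    rw [hcard] at this
    exact this
  have hcs : (∑ i, (y i)⁻¹)^2 ≤ q * ∑ i, ((y i)⁻¹)^2 := by
    have := sq_sum_le_card_mul_sum_sq (s := (univ : Finset (Fin q))) (f := fun i => (y i)⁻¹)
    rw [hcard] at this
    exact_mod_cast this
  set P := ∏ i, y i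
  set S := ∑ i, (y i)⁻¹
  set T := ∑ i, ((y i)⁻¹)^2
  rw [h1, h3]
  have e2 : eS univ (q-2) y = P * (S^2 - T) / 2 := by linarith [h2]
  rw [e2]
  have hq1 : (1:ℝ) ≤ (q:ℝ) := by exact_mod_cast Nat.one_le_of_lt hq
  nlinarith [sq_nonneg P, mul_nonneg (sq_nonneg P) (sub_nonneg.2 hcs)]

lemma roots_iterate_derivative (p : Polynomial ℝ) (hp : p.roots.card = p.natDegree) (t : ℕ)
    (ht : t ≤ p.natDegree) :
    ((Polynomial.derivative)^[t] p).roots.card = p.natDegree - t ∧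
      ((Polynomial.derivative)^[t] p).natDegree = p.natDegree - t := by
  induction t with
  | zero => simp [hp]
  | succ t ih =>
    obtain ⟨hc, hd⟩ := ih (by omega)
    set D := (Polynomial.derivative)^[t] p with hD
    have hd1 : 1 ≤ D.natDegree := by omega
    have hder := Polynomial.card_roots_le_derivative D
    have hdd : (Polynomial.derivative D).natDegree < D.natDegree :=
      Polynomial.natDegree_derivative_lt (by omega)
    have hle : (Polynomial.derivative D).roots.card ≤ (Polynomial.derivative D).natDegree :=
      Polynomial.card_roots' _
    rw [Function.iterate_succ_apply', ← hD]
    constructor <;> omega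

/-- Newton's inequality for elementary symmetric functions of arbitrary reals. -/
lemma newton_ineq {ι : Type*} [DecidableEq ι] (A : Finset ι) (x : ι → ℝ) (j : ℕ)
    (hj : 1 ≤ j) (hjA : j + 1 ≤ A.card) :
    ((A.card : ℝ) - j + 1) * (j + 1) * (eS A (j-1) x * eS A (j+1) x) ≤
      ((A.card : ℝ) - j) * j * (eS A j x)^2 := by
  set m := A.card with hm
  set a := eS A (j-1) x with hadef
  set b := eS A j x with hbdef
  set c := eS A (j+1) x with hcdef
  have hmjR : (1:ℝ) ≤ (m:ℝ) - j := by
    have : ((j:ℝ) + 1) ≤ (m:ℝ) := by exact_mod_cast hjA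
    linarith
  have hjR : (1:ℝ) ≤ (j:ℝ) := by exact_mod_cast hj
  by_cases hac : a * c ≤ 0
  · have h1 : ((m:ℝ) - j + 1) * ((j:ℝ) + 1) * (a*c) ≤ 0 := by
      apply mul_nonpos_of_nonneg_of_nonpos _ hac
      nlinarith
    have h2 : (0:ℝ) ≤ ((m:ℝ) - j) * j * b^2 := by
      apply mul_nonneg (mul_nonneg (by linarith) (by linarith)) (sq_nonneg b)
    linarith
  push_neg at hac
  have hcne : c ≠ 0 := by
    intro h
    rw [h, mul_zero] at hac
    exact lt_irrefl 0 hac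
  -- the polynomial with roots -x i
  have hdpos : ∀ {n' k' : ℕ}, k' ≤ n' → (0:ℝ) < (n'.descFactorial k' : ℝ) := by
    intro n' k' hkn
    have h : n'.descFactorial k' ≠ 0 := fun h => by
      rw [Nat.descFactorial_eq_zero_iff_lt] at h; omega
    exact_mod_cast Nat.pos_of_ne_zero h
  set P : Polynomial ℝ := ∏ i ∈ A, (Polynomial.X + Polynomial.C (x i)) with hP
  have hPm : P.Monic := Polynomial.monic_prod_of_monic _ _ fun i _ => Polynomial.monic_X_add_C _
  have hPne : P ≠ 0 := hPm.ne_zero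
  have hPdeg : P.natDegree = m := by
    rw [hP, Polynomial.natDegree_prod _ _ (fun i _ => Polynomial.X_add_C_ne_zero (x i))]
    simp [Polynomial.natDegree_X_add_C, hm]
  have hProots : P.roots.card = m := by
    rw [hP, Polynomial.roots_prod _ _ (by rw [← hP]; exact hPne)]
    rw [Multiset.card_bind]
    have : ∀ i : ι, (Polynomial.X + Polynomial.C (x i)).roots = {-(x i)} := by
      intro i
      rw [← sub_neg_eq_add, ← map_neg Polynomial.C]
      exact Polynomial.roots_X_sub_C _
    simp [this, hm]
  have hPcoeff : ∀ r ≤ m, P.coeff (m - r) = eS A r x := by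
    intro r hr
    rw [hP, Finset.prod_X_add_C_coeff A x (by omega : m - r ≤ A.card)]
    rw [show A.card - (m - r) = r by omega]
    rfl
  set w := m - (j+1) with hwdef
  have hmw : m = w + (j+1) := by omega
  set D := (Polynomial.derivative)^[w] P with hD
  obtain ⟨hDr, hDd⟩ := roots_iterate_derivative P (by rw [hProots, hPdeg]) w (by omega)
  rw [hPdeg] at hDr hDd
  have hDr' : D.roots.card = j + 1 := by rw [hDr]; omega
  have hDd' : D.natDegree = j + 1 := by rw [hDd]; omega
  have hDco : ∀ s ≤ j + 1, D.coeff s = ((s + w).descFactorial w : ℝ) * eS A (j+1-s) x := by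
    intro s hs
    rw [hD, Polynomial.coeff_iterate_derivative, nsmul_eq_mul]
    congr 1
    rw [show s + w = m - (j+1-s) by omega]
    exact hPcoeff (j+1-s) (by omega)
  set d0 := w.descFactorial w with hd0
  set d1 := (w+1).descFactorial w with hd1
  set d2 := (w+2).descFactorial w with hd2
  have hc0 : D.coeff 0 = (d0:ℝ) * c := by
    have := hDco 0 (by omega); simpa using this
  have hc1 : D.coeff 1 = (d1:ℝ) * b := by
    have := hDco 1 (by omega)
    rw [this, show j + 1 - 1 = j from rfl, ← hbdef, show 1 + w = w + 1 by omega]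
  have hc2 : D.coeff 2 = (d2:ℝ) * a := by
    have := hDco 2 (by omega)
    rw [this, show j + 1 - 2 = j - 1 by omega, ← hadef, show 2 + w = w + 2 by omega]
  have hL : D.leadingCoeff = (m.descFactorial w : ℝ) := by
    rw [Polynomial.leadingCoeff, hDd']
    have := hDco (j+1) (by omega)
    rw [this, show j + 1 - (j+1) = 0 by omega, show j + 1 + w = m by omega]
    have h00 : eS A 0 x = 1 := by simp [eS]
    rw [h00, mul_one]
  set L : ℝ := (m.descFactorial w : ℝ) with hLdef
  have hLpos : 0 < L := by
    rw [hLdef]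
    exact hdpos (by omega)
  -- Vieta
  have hrc : D.roots.card = D.natDegree := by rw [hDr', hDd']
  have V : ∀ s ≤ j + 1, D.coeff s = L * (-1)^(j+1-s) * D.roots.esymm (j+1-s) := by
    intro s hs
    have := Polynomial.coeff_eq_esymm_roots_of_card hrc (k := s) (by omega)
    rw [hDd', hL] at this
    exact this
  -- roots are nonzero
  have h0R : (0:ℝ) ∉ D.roots := by
    intro h0
    have hroot : D.IsRoot 0 := Polynomial.isRoot_of_mem_roots h0
    have : D.coeff 0 = 0 := by
      rw [Polynomial.coeff_zero_eq_eval_zero]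
      exact hroot
    rw [hc0] at this
    have hd0pos : (0:ℝ) < (d0:ℝ) := hdpos le_rfl
    exact hcne (by nlinarith)
  -- enumerate the roots
  set l := D.roots.toList with hl
  have hlen : l.length = j + 1 := by rw [hl, Multiset.length_toList, hDr']
  set q := l.length with hqdef
  have hq2 : 2 ≤ q := by omega
  have hmap : (Finset.univ : Finset (Fin q)).val.map l.get = D.roots := by
    rw [Fin.univ_val_map, List.ofFn_get, hl, Multiset.coe_toList]
  have hesymm : ∀ s : ℕ, D.roots.esymm s = eS Finset.univ s l.get := by
    intro s
    rw [← hmap, Finset.esymm_map_val]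
    rfl
  have hgne : ∀ i : Fin q, l.get i ≠ 0 := by
    intro i h0
    apply h0R
    rw [← hmap]
    exact Multiset.mem_map.2 ⟨i, by simp, h0⟩
  have core := core_newton hq2 l.get hgne
  rw [← hesymm, ← hesymm, ← hesymm] at core
  have hq1 : q = j + 1 := hlen
  rw [hq1] at core
  have hq2' : (j:ℝ) + 1 - 1 = (j:ℝ) := by ring
  -- core : 2 * (j+1) * (esymm (j+1-2) * esymm (j+1)) ≤ ((j+1:ℕ):ℝ - 1) * esymm (j+1-1) ^2
  rw [show j + 1 - 2 = j - 1 by omega, show j + 1 - 1 = j by omega] at core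
  set E1 := D.roots.esymm (j+1) with hE1
  set E2 := D.roots.esymm j with hE2
  set E3 := D.roots.esymm (j-1) with hE3
  have hcast : ((j+1 : ℕ) : ℝ) = (j:ℝ) + 1 := by push_cast; ring
  rw [hcast] at core
  -- core : 2 * ((j:ℝ)+1) * (E3 * E1) ≤ ((j:ℝ)+1-1) * E2^2
  -- sign bookkeeping
  set sg := (-1:ℝ)^j with hsg
  have hsg2 : sg^2 = 1 := by
    rw [hsg, ← pow_mul, mul_comm, pow_mul]
    simp
  have V0 : (d0:ℝ) * c = L * (-sg) * E1 := by
    have := V 0 (by omega)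
    rw [hc0] at this
    rw [this, show j + 1 - 0 = j + 1 by omega, pow_succ, hE1, hsg]
    ring
  have V1 : (d1:ℝ) * b = L * sg * E2 := by
    have := V 1 (by omega)
    rw [hc1] at this
    rw [this, show j + 1 - 1 = j by omega, hE2, hsg]
  have V2 : (d2:ℝ) * a = L * (-sg) * E3 := by
    have := V 2 (by omega)
    rw [hc2] at this
    rw [this, show j + 1 - 2 = j - 1 by omega, hE3, hsg]
    congr 2
    have : (-1:ℝ)^(j-1) * (-1)^1 = (-1:ℝ)^j := by
      rw [← pow_add, show j - 1 + 1 = j by omega]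
    simp at this
    linarith [this]
  -- translate core into a,b,c
  have key1 : ((d1:ℝ) * b)^2 = L^2 * E2^2 := by
    rw [V1]; linear_combination L^2*E2^2*hsg2
  have key2 : ((d2:ℝ) * a) * ((d0:ℝ) * c) = L^2 * (E3 * E1) := by
    rw [V2, V0]; linear_combination L^2*E3*E1*hsg2
  have Hfin : 2 * ((j:ℝ)+1) * (((d2:ℝ) * a) * ((d0:ℝ) * c)) ≤ (j:ℝ) * ((d1:ℝ) * b)^2 := by
    rw [key1, key2]
    have hL2 : (0:ℝ) < L^2 := by positivity
    calc 2 * ((j:ℝ)+1) * (L^2 * (E3 * E1)) = L^2 * (2 * ((j:ℝ)+1) * (E3 * E1)) := by ring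
      _ ≤ L^2 * (((j:ℝ)+1-1) * E2^2) := by
          apply mul_le_mul_of_nonneg_left _ (le_of_lt hL2)
          exact core
      _ = (j:ℝ) * (L^2 * E2^2) := by ring
  -- factorial identities
  have hfac1 : d1 = (w+1) * d0 := by
    have h1 : (w+1).descFactorial (w+1) = (w+1-w) * (w+1).descFactorial w :=
      Nat.descFactorial_succ (w+1) w
    rw [Nat.descFactorial_self, show w+1-w = 1 by omega, one_mul] at h1
    rw [hd1, ← h1, Nat.factorial_succ, hd0, Nat.descFactorial_self]
  have hfac2 : 2 * d2 = (w+2) * ((w+1) * d0) := by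
    have h1 : (w+2).descFactorial (w+2) = (w+2-(w+1)) * (w+2).descFactorial (w+1) :=
      Nat.descFactorial_succ (w+2) (w+1)
    have h2 : (w+2).descFactorial (w+1) = (w+2-w) * (w+2).descFactorial w :=
      Nat.descFactorial_succ (w+2) w
    rw [Nat.descFactorial_self, show w+2-(w+1) = 1 by omega, one_mul] at h1
    rw [h2, show w+2-w = 2 by omega] at h1
    have hfact2 : (w+2).factorial = (w+2)*((w+1)*(w.factorial)) := by
      rw [show w+2 = (w+1)+1 by omega, Nat.factorial_succ, Nat.factorial_succ]
    rw [hd2, ← h1, hfact2, hd0, Nat.descFactorial_self]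
  have hw1 : ((w:ℝ) + 1) = (m:ℝ) - j := by
    rw [hmw]; push_cast; ring
  have hw2 : ((w:ℝ) + 2) = (m:ℝ) - j + 1 := by
    rw [hmw]; push_cast; ring
  have hd0pos : (0:ℝ) < (d0:ℝ) := hdpos le_rfl
  have hfac1R : (d1:ℝ) = ((m:ℝ) - j) * d0 := by
    rw [← hw1]; exact_mod_cast congrArg (Nat.cast : ℕ → ℝ) hfac1
  have hfac2R : 2 * (d2:ℝ) = ((m:ℝ) - j + 1) * (((m:ℝ) - j) * d0) := by
    rw [← hw2, ← hw1]; exact_mod_cast congrArg (Nat.cast : ℕ → ℝ) hfac2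
  -- final descent
  have hKpos : (0:ℝ) < ((m:ℝ) - j) * (d0:ℝ)^2 := by positivity
  refine le_of_mul_le_mul_right ?_ hKpos
  calc ((m:ℝ) - j + 1) * ((j:ℝ) + 1) * (a * c) * (((m:ℝ) - j) * (d0:ℝ)^2)
      = 2 * ((j:ℝ)+1) * (((d2:ℝ) * a) * ((d0:ℝ) * c)) := by
        rw [show (2:ℝ) * ((j:ℝ)+1) * (((d2:ℝ) * a) * ((d0:ℝ) * c))
            = ((j:ℝ)+1) * (2 * (d2:ℝ)) * a * (d0:ℝ) * c by ring, hfac2R]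
        ring
    _ ≤ (j:ℝ) * ((d1:ℝ) * b)^2 := Hfin
    _ = ((m:ℝ) - j) * (j:ℝ) * b^2 * (((m:ℝ) - j) * (d0:ℝ)^2) := by
        rw [hfac1R]; ring

lemma esymm_eq_eS (n k : ℕ) (x : Fin n → ℝ) : esymm n k x = eS Finset.univ k x := rfl
lemma esymmDel_eq_eS (n k : ℕ) (x : Fin n → ℝ) (i : Fin n) :
    esymmDel n k x i = eS (Finset.univ.erase i) k x := rfl

lemma card_univ_fin (n : ℕ) : (Finset.univ : Finset (Fin n)).card = n := by simp

lemma card_erase_fin {n : ℕ} (i : Fin n) : ((Finset.univ : Finset (Fin n)).erase i).card = n - 1 := by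
  rw [Finset.card_erase_of_mem (Finset.mem_univ i), card_univ_fin]

lemma eS_nonneg_of_garding {n k : ℕ} {x : Fin n → ℝ} (hx : x ∈ gardingCone n k) {m : ℕ}
    (hm : m ≤ k) : 0 ≤ eS Finset.univ m x := by
  rcases Nat.eq_zero_or_pos m with h | h
  · subst h; rw [eS_zero]; norm_num
  · exact le_of_lt (hx m h hm)

lemma garding_shift {n k : ℕ} {x : Fin n → ℝ} (hx : x ∈ gardingCone n k) {t : ℝ} (ht : 0 ≤ t) :
    (fun i => x i + t) ∈ gardingCone n k := by
  intro j hj1 hjk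
  rw [esymm_eq_eS, eS_shift]
  apply Finset.sum_pos'
  · intro m hm
    rw [Finset.mem_range] at hm
    apply mul_nonneg (mul_nonneg (by positivity) _) (by positivity)
    exact eS_nonneg_of_garding hx (by omega)
  · refine ⟨j, Finset.self_mem_range_succ j, ?_⟩
    rw [Nat.sub_self, pow_zero, Nat.choose_zero_right, Nat.cast_one, one_mul, mul_one]
    exact hx j hj1 hjk

lemma eS_shift_continuous {ι : Type*} (A : Finset ι) (j : ℕ) (x : ι → ℝ) :
    Continuous (fun t : ℝ => eS A j (fun i => x i + t)) := by
  unfold eS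
  apply continuous_finset_sum
  intro s _
  apply continuous_finset_prod
  intro i _
  continuity

/-- The key positivity of deleted symmetric functions on the Garding cone. -/
lemma del_pos : ∀ (k n : ℕ), k ≤ n → ∀ {x : Fin n → ℝ}, x ∈ gardingCone n k →
    ∀ (i : Fin n) (j : ℕ), 1 ≤ j → j + 1 ≤ k → 0 < eS (Finset.univ.erase i) j x := by
  intro k
  induction k using Nat.strong_induction_on with
  | _ k IH =>
    intro n hkn x hx i j hj1 hjk
    by_cases hjk' : j + 1 = k
    case neg =>
      have hsub : x ∈ gardingCone n (j+1) := fun j' h1 h2 => hx j' h1 (by omega)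
      exact IH (j+1) (by omega) n (by omega) hsub i j hj1 le_rfl
    case pos =>
      subst hjk'
      -- nonvanishing along the ray x + t
      have hnz : ∀ t : ℝ, 0 ≤ t → eS (Finset.univ.erase i) j (fun i' => x i' + t) ≠ 0 := by
        intro t ht h0
        set y : Fin n → ℝ := fun i' => x i' + t with hy
        have hyG : y ∈ gardingCone n (j+1) := garding_shift hx ht
        have hsplit := eS_erase (Finset.mem_univ i) j y
        have hek : 0 < eS Finset.univ (j+1) y := by
          rw [← esymm_eq_eS]
          exact hyG (j+1) (by omega) le_rfl
        rw [hsplit, h0, mul_zero, add_zero] at hek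
        have hcard : ((Finset.univ : Finset (Fin n)).erase i).card = n - 1 := card_erase_fin i
        by_cases hn : j + 1 = n
        · rw [eS_of_card_lt (by omega) y] at hek
          exact lt_irrefl 0 hek
        · have hjA : j + 1 ≤ ((Finset.univ : Finset (Fin n)).erase i).card := by omega
          have hnewton := newton_ineq (Finset.univ.erase i) y j hj1 hjA
          rw [h0] at hnewton
          have hjm1 : 0 < eS (Finset.univ.erase i) (j-1) y := by
            by_cases hj1' : j = 1
            · subst hj1'
              rw [show (1:ℕ) - 1 = 0 from rfl, eS_zero]
              norm_num
            · have hyj : y ∈ gardingCone n j := fun j' h1 h2 => hyG j' h1 (by omega)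
              exact IH j (by omega) n (by omega) hyj i (j-1) (by omega) (by omega)
          have hcR : ((j:ℝ) + 1) ≤ (((Finset.univ.erase i).card : ℕ) : ℝ) := by
            exact_mod_cast hjA
          have hL1 : (0:ℝ) < ((Finset.univ.erase i).card : ℝ) - j + 1 := by linarith
          have hLpos : 0 < (((Finset.univ.erase i).card : ℝ) - j + 1) * ((j:ℝ) + 1) *
              (eS (Finset.univ.erase i) (j-1) y * eS (Finset.univ.erase i) (j+1) y) :=
            mul_pos (mul_pos hL1 (by positivity)) (mul_pos hjm1 hek)
          norm_num at hnewton
          rw [hcard] at hLpos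
          linarith
      -- positivity at large t
      set t0 : ℝ := 1 + ∑ i' , |x i'| with ht0
      have ht0nn : 0 ≤ t0 := by positivity
      have hT : 0 < eS (Finset.univ.erase i) j (fun i' => x i' + t0) := by
        apply eS_pos
        · rw [card_erase_fin]; omega
        · intro i' _
          have h1 : |x i'| ≤ ∑ i'' , |x i''| :=
            Finset.single_le_sum (fun i'' _ => abs_nonneg (x i'')) (Finset.mem_univ i')
          have h2 : -|x i'| ≤ x i' := neg_abs_le (x i')
          rw [ht0]
          linarith
      -- intermediate value theorem
      have hg0 : eS (Finset.univ.erase i) j (fun i' => x i' + 0) ≠ 0 := hnz 0 le_rfl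
      have hgx : (fun i' => x i' + 0) = x := by funext i'; ring
      rcases lt_or_gt_of_ne hg0 with hneg | hpos
      · exfalso
        have hcont := (eS_shift_continuous (Finset.univ.erase i) j x).continuousOn
          (s := Set.Icc 0 t0)
        have hiv := intermediate_value_Icc ht0nn hcont
        have h0mem : (0:ℝ) ∈ Set.Icc (eS (Finset.univ.erase i) j (fun i' => x i' + 0))
            (eS (Finset.univ.erase i) j (fun i' => x i' + t0)) :=
          ⟨le_of_lt hneg, le_of_lt hT⟩
        obtain ⟨t, htmem, htval⟩ := hiv h0mem
        exact hnz t htmem.1 htval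
      · rw [hgx] at hpos
        exact hpos

lemma newton_strict {ι : Type*} [DecidableEq ι] (A : Finset ι) (y : ι → ℝ) (j : ℕ) (hj : 1 ≤ j)
    (hjA : j + 1 ≤ A.card) (hm1 : 0 < eS A (j-1) y) (h0 : 0 < eS A j y)
    (hp1 : 0 < eS A (j+1) y) :
    eS A (j+1) y * eS A (j-1) y < (eS A j y)^2 := by
  have hN := newton_ineq A y j hj hjA
  have hc : ((j:ℝ)+1) ≤ (A.card:ℝ) := by exact_mod_cast hjA
  have hj1 : (1:ℝ) ≤ (j:ℝ) := by exact_mod_cast hj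
  by_contra hcon
  push_neg at hcon
  set X := eS A (j-1) y * eS A (j+1) y with hX
  have hXpos : 0 < X := mul_pos hm1 hp1
  have h1 : ((A.card:ℝ)-j)*j*((eS A j y)^2) ≤ ((A.card:ℝ)-j)*j*X := by
    apply mul_le_mul_of_nonneg_left _ (mul_nonneg (by linarith) (by linarith))
    nlinarith [hcon]
  have key : ((A.card:ℝ)-j+1)*((j:ℝ)+1)*X ≤ ((A.card:ℝ)-j)*(j:ℝ)*X := le_trans hN h1
  have expand : ((A.card:ℝ)-j+1)*((j:ℝ)+1)*X - ((A.card:ℝ)-j)*(j:ℝ)*X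
      = ((A.card:ℝ)+1)*X := by ring
  have h2 : ((A.card:ℝ)+1)*X ≤ 0 := by linarith
  have h3 : 0 < ((A.card:ℝ)+1)*X := mul_pos (by linarith) hXpos
  linarith

lemma maclaurin_chain {ι : Type*} [DecidableEq ι] (A : Finset ι) (y : ι → ℝ) (l : ℕ)
    (hl : 1 ≤ l) (K : ℕ) (hK : K ≤ A.card) (hpos : ∀ j', j' ≤ K → 0 < eS A j' y) :
    ∀ k, l + 1 ≤ k → k ≤ K → eS A k y * eS A (l-1) y < eS A (k-1) y * eS A l y := by
  refine Nat.le_induction ?_ ?_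
  · intro h2
    have hstrict := newton_strict A y l hl (by omega) (hpos (l-1) (by omega))
      (hpos l (by omega)) (hpos (l+1) (by omega))
    rw [show l + 1 - 1 = l by omega]
    nlinarith [hstrict]
  · intro k hk IHk hk1
    have IH := IHk (by omega)
    have hstrict := newton_strict A y k (by omega) (by omega) (hpos (k-1) (by omega))
      (hpos k (by omega)) (hpos (k+1) (by omega))
    rw [show k + 1 - 1 = k by omega]
    have hkm1 : 0 < eS A (k-1) y := hpos (k-1) (by omega)
    have hkk : 0 < eS A k y := hpos k (by omega)
    have hll : 0 < eS A l y := hpos l (by omega)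
    have hlm1 : 0 < eS A (l-1) y := hpos (l-1) (by omega)
    have hkp1 : 0 < eS A (k+1) y := hpos (k+1) (by omega)
    nlinarith [mul_lt_mul_of_pos_right hstrict hlm1, mul_lt_mul_of_pos_left IH hkk]


/-- Ellipticity: for λ ∈ Γ_k and 0 ≤ l < k ≤ n, each partial derivative of
F(λ) = [σ_k(λ)/σ_l(λ)]^{1/(k-l)} is strictly positive, i.e.
σ_{k-1}(λ|i) σ_l(λ) - σ_k(λ) σ_{l-1}(λ|i) > 0 for each i. -/
theorem hessian_quotient_elliptic (n k l : ℕ) (hlk : l < k) (hkn : k ≤ n)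
    (x : Fin n → ℝ) (hx : x ∈ gardingCone n k) (i : Fin n) :
    0 < esymmDel n (k - 1) x i * esymm n l x -
        esymm n k x * esymmDelZ n ((l : ℤ) - 1) x i := by
  set A := (Finset.univ : Finset (Fin n)).erase i with hA
  have hcard : A.card = n - 1 := card_erase_fin i
  have hdel0 : ∀ j, j ≤ k - 1 → 0 < eS A j x := by
    intro j hj
    rcases Nat.eq_zero_or_pos j with h0 | h1
    · subst h0; rw [eS_zero]; norm_num
    · exact del_pos k n hkn hx i j h1 (by omega)
  have hkm1pos : 0 < eS A (k-1) x := hdel0 (k-1) le_rfl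
  rcases Nat.eq_zero_or_pos l with hl0 | hl1
  · subst hl0
    have hz : esymmDelZ n (((0:ℕ) : ℤ) - 1) x i = 0 := by
      rw [esymmDelZ, if_pos (by norm_num)]
    rw [hz, mul_zero, sub_zero, esymm_eq_eS, esymmDel_eq_eS, eS_zero, mul_one]
    exact hkm1pos
  · have hz : esymmDelZ n ((l : ℤ) - 1) x i = esymmDel n (l-1) x i := by
      rw [esymmDelZ, if_neg (by omega)]
      congr 1
      omega
    rw [hz, esymm_eq_eS, esymm_eq_eS, esymmDel_eq_eS, esymmDel_eq_eS]
    have hsplitl : eS Finset.univ l x = eS A l x + x i * eS A (l-1) x := by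
      have := eS_erase (Finset.mem_univ i) (l-1) x
      rw [show l - 1 + 1 = l by omega] at this
      rw [this, hA]
    have hsplitk : eS Finset.univ k x = eS A k x + x i * eS A (k-1) x := by
      have := eS_erase (Finset.mem_univ i) (k-1) x
      rw [show k - 1 + 1 = k by omega] at this
      rw [this, hA]
    rw [hsplitl, hsplitk]
    have hgoal : eS A (k-1) x * (eS A l x + x i * eS A (l-1) x) -
        (eS A k x + x i * eS A (k-1) x) * eS A (l-1) x
        = eS A (k-1) x * eS A l x - eS A k x * eS A (l-1) x := by ring
    rw [hgoal]
    have hlpos : 0 < eS A l x := hdel0 l (by omega)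
    have hlm1pos : 0 < eS A (l-1) x := hdel0 (l-1) (by omega)
    by_cases hsk : eS A k x ≤ 0
    · nlinarith [mul_pos hkm1pos hlpos, mul_nonneg (neg_nonneg.2 hsk) (le_of_lt hlm1pos)]
    · push_neg at hsk
      have hkA : k ≤ A.card := by
        by_contra hcon
        push_neg at hcon
        rw [eS_of_card_lt hcon x] at hsk
        exact lt_irrefl 0 hsk
      have hpos' : ∀ j', j' ≤ k → 0 < eS A j' x := by
        intro j' hj'
        rcases Nat.eq_or_lt_of_le hj' with h' | h'
        · rw [h']; exact hsk
        · exact hdel0 j' (by omega)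
      have := maclaurin_chain A x l hl1 k hkA hpos' k (by omega) le_rfl
      linarith
end
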